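/- arXiv:1605.00856 — 3 statements merged into one kernel-verified Lean document; each statement's English description precedes it below -/
import Mathlib

section
/- Let T ∈ (0,∞), p ∈ [1,∞), β ∈ [0,1], let (Ω,F,P) be a probability space, let (E,‖·‖_E) be a real Banach space, and let Y^N : [0,T]×Ω → E, N ∈ ℕ_0, be strongly measurable stochastic processes with continuous sample paths such that limsup_{N→∞} |Y^N|_{C^β([0,T];L^p)} < ∞ and such that for every t ∈ [0,T]: limsup_{N→∞} ‖Y^0_t − Y^N_t‖_{L^p(P;E)} = 0. Then: (i) |Y^0|_{C^β([0,T];L^p)} ≤ limsup_{N→∞} |Y^N|_{C^β([0,T];L^p)} < ∞; (ii) for all α ∈ [0,1] with α < β: limsup_{N→∞} ‖Y^0 − Y^N‖_{C^α([0,T];L^p)} = 0; and (iii) for all α ∈ [0,1] with α < β − 1/p: limsup_{N→∞} ‖Y^0 − Y^N‖_{L^p(P;C^α([0,T],E))} = 0. -/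
open MeasureTheory ENNReal Filter

/-- The Hölder seminorm (exponent `r`) of `f` on `[0,T]`. -/
noncomputable def holderSemiOn {E : Type} [NormedAddCommGroup E]
    (T : ℝ) (r : ℝ) (f : ℝ → E) : ℝ≥0∞ :=
  ⨆ (s : ℝ) (t : ℝ) (_ : s ∈ Set.Icc (0:ℝ) T) (_ : t ∈ Set.Icc (0:ℝ) T)
    (_ : s ≠ t), (‖f s - f t‖₊ : ℝ≥0∞) / ENNReal.ofReal (|s - t| ^ r)

/-- The supremum norm of `f` on `[0,T]`. -/
noncomputable def supNormOn {E : Type} [NormedAddCommGroup E]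
    (T : ℝ) (f : ℝ → E) : ℝ≥0∞ :=
  ⨆ (t : ℝ) (_ : t ∈ Set.Icc (0:ℝ) T), (‖f t‖₊ : ℝ≥0∞)

/-- The Hölder norm (exponent `r`) of `f` on `[0,T]`. -/
noncomputable def holderNormOn {E : Type} [NormedAddCommGroup E]
    (T : ℝ) (r : ℝ) (f : ℝ → E) : ℝ≥0∞ :=
  supNormOn T f + holderSemiOn T r f

/-- Hölder seminorm in time of a stochastic process, measured in `L^p(P;E)`. -/
noncomputable def lpHolderSemi {Ω E : Type} [MeasurableSpace Ω] [NormedAddCommGroup E]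
    (P : MeasureTheory.Measure Ω) (T p r : ℝ) (X : ℝ → Ω → E) : ℝ≥0∞ :=
  ⨆ (s : ℝ) (t : ℝ) (_ : s ∈ Set.Icc (0:ℝ) T) (_ : t ∈ Set.Icc (0:ℝ) T)
    (_ : s ≠ t),
    MeasureTheory.eLpNorm (fun ω => X s ω - X t ω) (ENNReal.ofReal p) P
      / ENNReal.ofReal (|s - t| ^ r)

/-- Supremum in time of the `L^p(P;E)`-norms of a stochastic process. -/
noncomputable def lpSupNorm {Ω E : Type} [MeasurableSpace Ω] [NormedAddCommGroup E]
    (P : MeasureTheory.Measure Ω) (T p : ℝ) (X : ℝ → Ω → E) : ℝ≥0∞ :=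
  ⨆ (t : ℝ) (_ : t ∈ Set.Icc (0:ℝ) T),
    MeasureTheory.eLpNorm (X t) (ENNReal.ofReal p) P

/-- Hölder norm in time of a stochastic process, measured in `L^p(P;E)`. -/
noncomputable def lpHolderNorm {Ω E : Type} [MeasurableSpace Ω] [NormedAddCommGroup E]
    (P : MeasureTheory.Measure Ω) (T p r : ℝ) (X : ℝ → Ω → E) : ℝ≥0∞ :=
  lpSupNorm P T p X + lpHolderSemi P T p r X

/-- The `L^p(P; C^r([0,T],E))`-norm of a stochastic process. -/
noncomputable def lpOfHolderNorm {Ω E : Type} [MeasurableSpace Ω] [NormedAddCommGroup E]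
    (P : Measure Ω) (T p r : ℝ) (X : ℝ → Ω → E) : ℝ≥0∞ :=
  (∫⁻ ω, (holderNormOn T r (fun t => X t ω)) ^ p ∂P) ^ (1 / p)


/-! ### Auxiliary lemmas -/

open scoped NNReal Topology

namespace CorAux

open Filter MeasureTheory Set Topology

/-! #### limsup lemmas -/

lemma limsup_add_le (u v : ℕ → ℝ≥0∞) :
    limsup (fun n => u n + v n) atTop ≤ limsup u atTop + limsup v atTop := by
  rcases eq_top_or_lt_top (limsup u atTop) with hu | hu
  · rw [hu, top_add]; exact le_top
  rcases eq_top_or_lt_top (limsup v atTop) with hv | hv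
  · rw [hv, add_top]; exact le_top
  refine ENNReal.le_of_forall_pos_le_add fun ε hε _ => ?_
  have hε2 : ((ε : ℝ≥0∞) / 2) ≠ 0 := by
    simp only [ne_eq, ENNReal.div_eq_zero_iff, ENNReal.coe_eq_zero, not_or]
    exact ⟨by exact_mod_cast hε.ne', by simp⟩
  have h1 := eventually_lt_of_limsup_lt (ENNReal.lt_add_right hu.ne hε2)
  have h2 := eventually_lt_of_limsup_lt (ENNReal.lt_add_right hv.ne hε2)
  refine limsup_le_of_le (by isBoundedDefault) ?_
  filter_upwards [h1, h2] with n h1 h2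
  calc u n + v n ≤ (limsup u atTop + (ε : ℝ≥0∞) / 2) + (limsup v atTop + (ε : ℝ≥0∞) / 2) :=
        add_le_add h1.le h2.le
    _ = limsup u atTop + limsup v atTop + ε := by
        rw [add_add_add_comm, ENNReal.add_halves]

lemma tendsto_of_limsup_zero {u : ℕ → ℝ≥0∞} (h : limsup u atTop = 0) :
    Tendsto u atTop (𝓝 0) :=
  tendsto_of_le_liminf_of_limsup_le (zero_le) h.le

lemma limsup_sum_le {ι : Type*} (s : Finset ι) (u : ι → ℕ → ℝ≥0∞) :
    limsup (fun N => ∑ i ∈ s, u i N) atTop ≤ ∑ i ∈ s, limsup (u i) atTop := by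
  classical
  induction s using Finset.induction with
  | empty => simp
  | insert _ _ h ih =>
      simp only [Finset.sum_insert h]
      exact (limsup_add_le _ _).trans (add_le_add le_rfl ih)

/-! #### extraction lemmas -/

section extract
variable {Ω E : Type} [MeasurableSpace Ω] [NormedAddCommGroup E]
  {P : Measure Ω} {T p r : ℝ} {X : ℝ → Ω → E} {c : ℝ≥0∞}

lemma ofReal_rpow_ne_zero {x : ℝ} (hx : 0 < x) (r : ℝ) : ENNReal.ofReal (x ^ r) ≠ 0 := by
  simp only [ne_eq, ENNReal.ofReal_eq_zero, not_le]
  exact Real.rpow_pos_of_pos hx r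

lemma le_lpHolderSemi {s t : ℝ} (hs : s ∈ Icc (0:ℝ) T) (ht : t ∈ Icc (0:ℝ) T) (hst : s ≠ t) :
    eLpNorm (fun ω => X s ω - X t ω) (ENNReal.ofReal p) P / ENNReal.ofReal (|s - t| ^ r)
      ≤ lpHolderSemi P T p r X :=
  le_iSup_of_le s <| le_iSup_of_le t <| le_iSup_of_le hs <| le_iSup_of_le ht <|
    le_iSup_of_le hst le_rfl

lemma eLpNorm_le_of_lpHolderSemi {s t : ℝ} (hs : s ∈ Icc (0:ℝ) T) (ht : t ∈ Icc (0:ℝ) T)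
    (hst : s ≠ t) :
    eLpNorm (fun ω => X s ω - X t ω) (ENNReal.ofReal p) P
      ≤ lpHolderSemi P T p r X * ENNReal.ofReal (|s - t| ^ r) := by
  have h0 : ENNReal.ofReal (|s - t| ^ r) ≠ 0 :=
    ofReal_rpow_ne_zero (abs_pos.2 (sub_ne_zero.2 hst)) r
  exact (ENNReal.div_le_iff h0 ENNReal.ofReal_ne_top).1 (le_lpHolderSemi hs ht hst)

lemma le_lpSupNorm {t : ℝ} (ht : t ∈ Icc (0:ℝ) T) :
    eLpNorm (X t) (ENNReal.ofReal p) P ≤ lpSupNorm P T p X :=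
  le_iSup_of_le t <| le_iSup_of_le ht le_rfl

lemma lpHolderSemi_le (h : ∀ s ∈ Icc (0:ℝ) T, ∀ t ∈ Icc (0:ℝ) T, s ≠ t →
    eLpNorm (fun ω => X s ω - X t ω) (ENNReal.ofReal p) P / ENNReal.ofReal (|s - t| ^ r) ≤ c) :
    lpHolderSemi P T p r X ≤ c :=
  iSup_le fun s => iSup_le fun t => iSup_le fun hs => iSup_le fun ht => iSup_le fun hst =>
    h s hs t ht hst

lemma lpSupNorm_le (h : ∀ t ∈ Icc (0:ℝ) T, eLpNorm (X t) (ENNReal.ofReal p) P ≤ c) :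
    lpSupNorm P T p X ≤ c :=
  iSup_le fun t => iSup_le fun ht => h t ht

end extract


/-! #### dyadic chaining -/

section chain
variable {E : Type} [NormedAddCommGroup E]

/-- Dyadic grid point `k T / 2^n`. -/
noncomputable def gridPt (T : ℝ) (n k : ℕ) : ℝ := (k : ℝ) * T / 2 ^ n

lemma gridPt_nonneg {T : ℝ} (hT : 0 < T) (n k : ℕ) : 0 ≤ gridPt T n k := by
  unfold gridPt; positivity

lemma gridPt_mem {T : ℝ} (hT : 0 < T) {n k : ℕ} (hk : k ≤ 2 ^ n) :
    gridPt T n k ∈ Icc (0:ℝ) T := by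
  refine ⟨gridPt_nonneg hT n k, ?_⟩
  unfold gridPt
  rw [div_le_iff₀ (by positivity)]
  have hk' : (k:ℝ) ≤ 2 ^ n := by exact_mod_cast hk
  nlinarith

lemma gridPt_double (T : ℝ) (n k : ℕ) : gridPt T (n+1) (2*k) = gridPt T n k := by
  unfold gridPt
  push_cast
  rw [pow_succ]
  have h2 : ((2:ℝ) ^ n) ≠ 0 := by positivity
  field_simp

/-- Largest increment at dyadic level `n`. -/
noncomputable def Mdy (T : ℝ) (f : ℝ → E) (n : ℕ) : ℝ≥0∞ :=
  (Finset.range (2 ^ n)).sup fun k => edist (f (gridPt T n (k+1))) (f (gridPt T n k))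

lemma edist_grid_le (T : ℝ) (f : ℝ → E) (n : ℕ) {a c : ℕ} (h : a + c ≤ 2 ^ n) :
    edist (f (gridPt T n (a + c))) (f (gridPt T n a)) ≤ (c : ℝ≥0∞) * Mdy T f n := by
  induction c with
  | zero => simp
  | succ c ih =>
      have h1 : a + c ≤ 2 ^ n := by omega
      have h2 : a + c < 2 ^ n := by omega
      calc edist (f (gridPt T n (a + (c+1)))) (f (gridPt T n a))
          ≤ edist (f (gridPt T n (a + c + 1))) (f (gridPt T n (a + c)))
            + edist (f (gridPt T n (a + c))) (f (gridPt T n a)) := by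
            rw [show a + (c+1) = a + c + 1 from rfl]
            exact edist_triangle _ _ _
        _ ≤ Mdy T f n + (c : ℝ≥0∞) * Mdy T f n := by
            refine add_le_add ?_ (ih h1)
            exact Finset.le_sup (f := fun k => edist (f (gridPt T n (k+1))) (f (gridPt T n k)))
              (Finset.mem_range.2 h2)
        _ = ((c+1 : ℕ) : ℝ≥0∞) * Mdy T f n := by
            push_cast
            rw [add_mul, one_mul, add_comm]

lemma edist_grid_le' (T : ℝ) (f : ℝ → E) (n : ℕ) {a b : ℕ} (hab : a ≤ b) (hb : b ≤ 2 ^ n) :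
    edist (f (gridPt T n b)) (f (gridPt T n a)) ≤ ((b - a : ℕ) : ℝ≥0∞) * Mdy T f n := by
  have h := edist_grid_le T f n (a := a) (c := b - a) (by omega)
  rwa [show a + (b - a) = b by omega] at h

lemma chain_dyadic (T : ℝ) (f : ℝ → E) (m : ℕ) :
    ∀ d : ℕ, ∀ a b : ℕ, a ≤ b → b ≤ 2 ^ (m + d) → b - a ≤ 2 ^ (d + 1) →
      edist (f (gridPt T (m + d) b)) (f (gridPt T (m + d) a))
        ≤ 2 * ∑ j ∈ Finset.range (d + 1), Mdy T f (m + j) := by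
  intro d
  induction d with
  | zero =>
      intro a b hab hb hd
      calc edist (f (gridPt T (m+0) b)) (f (gridPt T (m+0) a))
          ≤ ((b - a : ℕ) : ℝ≥0∞) * Mdy T f (m+0) := edist_grid_le' T f _ hab hb
        _ ≤ 2 * Mdy T f (m+0) := by
            refine mul_le_mul_left ?_ _
            have : ((b - a : ℕ) : ℝ≥0∞) ≤ ((2:ℕ) : ℝ≥0∞) := Nat.cast_le.2 (by simpa using hd)
            simpa using this
        _ = 2 * ∑ j ∈ Finset.range 1, Mdy T f (m + j) := by simp
  | succ d ih =>
      intro a b hab hb hd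
      set a' := a / 2 with ha'
      set b' := b / 2 with hb'
      have hdm : 2 * b' + b % 2 = b := Nat.div_add_mod b 2
      have ham : 2 * a' + a % 2 = a := Nat.div_add_mod a 2
      have hmod_b : b % 2 < 2 := Nat.mod_lt _ (by norm_num)
      have hmod_a : a % 2 < 2 := Nat.mod_lt _ (by norm_num)
      have hab' : a' ≤ b' := Nat.div_le_div_right hab
      have hpow : (2:ℕ) ^ (m + (d+1)) = 2 * 2 ^ (m + d) := by
        rw [show m + (d+1) = (m+d)+1 by omega, pow_succ]; ring
      have hb'2 : b' ≤ 2 ^ (m + d) := by omega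
      have hd' : b' - a' ≤ 2 ^ (d + 1) := by
        have h22 : (2:ℕ) ^ (d + 2) = 2 * 2 ^ (d+1) := by rw [pow_succ]; ring
        omega
      have hstep : ∀ k : ℕ, k ≤ 2 ^ (m + (d+1)) → ∀ k' r : ℕ, 2 * k' + r = k → r < 2 →
          edist (f (gridPt T (m + (d+1)) k)) (f (gridPt T (m + (d+1)) (2 * k')))
            ≤ Mdy T f (m + (d+1)) := by
        intro k hk k' r hkr hr
        have h := edist_grid_le T f (m + (d+1)) (a := 2 * k') (c := r) (by omega)
        rw [show 2 * k' + r = k from hkr] at h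
        refine h.trans ?_
        calc (r : ℝ≥0∞) * Mdy T f (m + (d+1)) ≤ 1 * Mdy T f (m + (d+1)) := by
              refine mul_le_mul_left ?_ _
              have : (r : ℝ≥0∞) ≤ ((1:ℕ) : ℝ≥0∞) := Nat.cast_le.2 (by omega)
              simpa using this
          _ = _ := one_mul _
      have step1 := hstep b hb b' (b % 2) hdm hmod_b
      have step3 := hstep a (le_trans hab hb) a' (a % 2) ham hmod_a
      have step2 : edist (f (gridPt T (m + (d+1)) (2 * b'))) (f (gridPt T (m + (d+1)) (2 * a')))
          ≤ 2 * ∑ j ∈ Finset.range (d + 1), Mdy T f (m + j) := by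
        rw [show m + (d+1) = (m + d) + 1 by omega, gridPt_double, gridPt_double]
        exact ih a' b' hab' hb'2 hd'
      calc edist (f (gridPt T (m + (d+1)) b)) (f (gridPt T (m + (d+1)) a))
          ≤ edist (f (gridPt T (m+(d+1)) b)) (f (gridPt T (m+(d+1)) (2*b')))
            + edist (f (gridPt T (m+(d+1)) (2*b'))) (f (gridPt T (m+(d+1)) (2*a')))
            + edist (f (gridPt T (m+(d+1)) (2*a'))) (f (gridPt T (m+(d+1)) a)) :=
            edist_triangle4 _ _ _ _
        _ ≤ Mdy T f (m+(d+1)) + 2 * ∑ j ∈ Finset.range (d+1), Mdy T f (m+j)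
            + Mdy T f (m+(d+1)) := by
            refine add_le_add (add_le_add step1 step2) ?_
            rw [edist_comm]; exact step3
        _ = 2 * ∑ j ∈ Finset.range (d+1+1), Mdy T f (m + j) := by
            conv_rhs => rw [Finset.sum_range_succ]
            ring

/-- Tail sum of dyadic increments from level `m` on. -/
noncomputable def dyTail (T : ℝ) (f : ℝ → E) (m : ℕ) : ℝ≥0∞ := ∑' j : ℕ, Mdy T f (m + j)

lemma chain_dyadic' (T : ℝ) (f : ℝ → E) (m d : ℕ) {a b : ℕ} (hab : a ≤ b)
    (hb : b ≤ 2 ^ (m + d)) (hd : b - a ≤ 2 ^ (d + 1)) :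
    edist (f (gridPt T (m + d) b)) (f (gridPt T (m + d) a)) ≤ 2 * dyTail T f m :=
  (chain_dyadic T f m d a b hab hb hd).trans
    (mul_le_mul_right (ENNReal.sum_le_tsum (f := fun j => Mdy T f (m + j)) _) 2)

lemma tendsto_div_two_pow (T : ℝ) : Tendsto (fun N : ℕ => T / 2 ^ N) atTop (𝓝 0) := by
  have h : (fun N : ℕ => T / 2 ^ N) = fun N => T * (1/2:ℝ)^N := by
    funext N; rw [div_pow, one_pow, one_div, ← div_eq_mul_inv]
  rw [h]
  simpa using (_root_.tendsto_pow_atTop_nhds_zero_of_lt_one (by norm_num : (0:ℝ) ≤ 1/2)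
    (by norm_num : (1/2 : ℝ) < 1)).const_mul T

lemma chain_cont_aux {T : ℝ} (hT : 0 < T) {f : ℝ → E} (hf : ContinuousOn f (Icc 0 T))
    {s t : ℝ} (hs : s ∈ Icc (0:ℝ) T) (ht : t ∈ Icc (0:ℝ) T) (m : ℕ)
    (hst : s - t ≤ T / 2 ^ m) (hts : t ≤ s) :
    edist (f s) (f t) ≤ 2 * dyTail T f m := by
  classical
  set aN : ℕ → ℕ := fun N => ⌊t * 2 ^ N / T⌋₊ with haN
  set bN : ℕ → ℕ := fun N => ⌊s * 2 ^ N / T⌋₊ with hbN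
  have h2pos : ∀ N : ℕ, (0:ℝ) < 2 ^ N := fun N => by positivity
  -- generic floor-grid facts
  have hgrid : ∀ (x : ℝ), 0 ≤ x → x ≤ T → ∀ N : ℕ,
      x - T / 2 ^ N < gridPt T N ⌊x * 2 ^ N / T⌋₊ ∧ gridPt T N ⌊x * 2 ^ N / T⌋₊ ≤ x := by
    intro x hx0 hxT N
    have hnn : 0 ≤ x * 2 ^ N / T := by positivity
    have hfl : (⌊x * 2 ^ N / T⌋₊ : ℝ) ≤ x * 2 ^ N / T := Nat.floor_le hnn
    have hfl' : x * 2 ^ N / T - 1 < (⌊x * 2 ^ N / T⌋₊ : ℝ) := Nat.sub_one_lt_floor _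
    have hcancel : x * 2 ^ N / T * T = x * 2 ^ N := div_mul_cancel₀ _ hT.ne'
    constructor
    · unfold gridPt
      rw [lt_div_iff₀ (h2pos N)]
      have h1 : (x * 2 ^ N / T - 1) * T < (⌊x * 2 ^ N / T⌋₊ : ℝ) * T := by
        exact mul_lt_mul_of_pos_right hfl' hT
      rw [sub_mul, hcancel, one_mul] at h1
      have h2 : (x - T / 2 ^ N) * 2 ^ N = x * 2 ^ N - T := by
        field_simp
      linarith
    · unfold gridPt
      rw [div_le_iff₀ (h2pos N)]
      have h1 : (⌊x * 2 ^ N / T⌋₊ : ℝ) * T ≤ x * 2 ^ N / T * T :=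
        mul_le_mul_of_nonneg_right hfl hT.le
      rw [hcancel] at h1
      linarith
  have hmem_a : ∀ N, gridPt T N (aN N) ∈ Icc (0:ℝ) T := fun N =>
    ⟨gridPt_nonneg hT _ _, le_trans (hgrid t ht.1 ht.2 N).2 ht.2⟩
  have hmem_b : ∀ N, gridPt T N (bN N) ∈ Icc (0:ℝ) T := fun N =>
    ⟨gridPt_nonneg hT _ _, le_trans (hgrid s hs.1 hs.2 N).2 hs.2⟩
  -- convergence of the grids
  have htendsto : ∀ (x : ℝ), 0 ≤ x → x ≤ T →
      Tendsto (fun N => gridPt T N ⌊x * 2 ^ N / T⌋₊) atTop (𝓝 x) := by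
    intro x hx0 hxT
    refine tendsto_of_tendsto_of_tendsto_of_le_of_le (g := fun N : ℕ => x - T / 2 ^ N)
      (h := fun _ : ℕ => x) ?_ tendsto_const_nhds
      (fun N => (hgrid x hx0 hxT N).1.le) (fun N => (hgrid x hx0 hxT N).2)
    simpa using tendsto_const_nhds.sub (tendsto_div_two_pow T)
  have hfa : Tendsto (fun N => f (gridPt T N (aN N))) atTop (𝓝 (f t)) :=
    (hf t ht).tendsto.comp
      (tendsto_nhdsWithin_iff.2 ⟨htendsto t ht.1 ht.2, Eventually.of_forall hmem_a⟩)
  have hfb : Tendsto (fun N => f (gridPt T N (bN N))) atTop (𝓝 (f s)) :=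
    (hf s hs).tendsto.comp
      (tendsto_nhdsWithin_iff.2 ⟨htendsto s hs.1 hs.2, Eventually.of_forall hmem_b⟩)
  -- the key uniform bound
  have key : ∀ N, m ≤ N →
      edist (f (gridPt T N (bN N))) (f (gridPt T N (aN N))) ≤ 2 * dyTail T f m := by
    intro N hN
    obtain ⟨d, rfl⟩ : ∃ d, N = m + d := ⟨N - m, by omega⟩
    have hab : aN (m+d) ≤ bN (m+d) := by
      refine Nat.floor_le_floor ?_
      gcongr
    have hbb : bN (m+d) ≤ 2 ^ (m+d) := by
      have h1 : s * 2 ^ (m+d) / T ≤ ((2 ^ (m+d) : ℕ) : ℝ) := by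
        push_cast
        rw [div_le_iff₀ hT]
        have := hs.2
        nlinarith [ (h2pos (m+d)).le ]
      calc bN (m+d) ≤ ⌊((2 ^ (m+d) : ℕ) : ℝ)⌋₊ := Nat.floor_le_floor h1
        _ = 2 ^ (m+d) := Nat.floor_natCast _
    have hdd : bN (m+d) - aN (m+d) ≤ 2 ^ (d + 1) := by
      have hfl : (bN (m+d) : ℝ) ≤ s * 2 ^ (m+d) / T := Nat.floor_le (by have := hs.1; positivity)
      have hfl' : t * 2 ^ (m+d) / T < (aN (m+d) : ℝ) + 1 := Nat.lt_floor_add_one _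
      have hsplit : s * 2 ^ (m+d) / T ≤ t * 2 ^ (m+d) / T + 2 ^ d := by
        have hpow : (2:ℝ) ^ (m+d) = 2 ^ m * 2 ^ d := pow_add 2 m d
        have : (s - t) * 2 ^ (m+d) / T ≤ (2:ℝ) ^ d := by
          rw [div_le_iff₀ hT, hpow]
          have h2m : (0:ℝ) < 2 ^ m := by positivity
          have := mul_le_mul_of_nonneg_right hst (mul_pos h2m (by positivity : (0:ℝ) < 2^d)).le
          calc (s - t) * (2 ^ m * 2 ^ d) ≤ T / 2 ^ m * (2 ^ m * 2 ^ d) := this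
            _ = 2 ^ d * T := by field_simp
        have heq : s * 2 ^ (m+d) / T = t * 2 ^ (m+d) / T + (s - t) * 2 ^ (m+d) / T := by
          ring
        rw [heq]
        linarith
      have hlt : (bN (m+d) : ℝ) < (aN (m+d) : ℝ) + 1 + 2 ^ d := by linarith
      have hltn : bN (m+d) < aN (m+d) + 1 + 2 ^ d := by exact_mod_cast (by push_cast; linarith : (bN (m+d) : ℝ) < ((aN (m+d) + 1 + 2 ^ d : ℕ) : ℝ))
      have h2d : (2:ℕ) ^ d ≤ 2 ^ (d+1) := Nat.pow_le_pow_right (by norm_num) (by omega)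
      omega
    exact chain_dyadic' T f m d hab hbb hdd
  exact le_of_tendsto (hfb.edist hfa) (eventually_atTop.2 ⟨m, key⟩)

end chain



section chain2
variable {E : Type} [NormedAddCommGroup E]

lemma chain_cont {T : ℝ} (hT : 0 < T) {f : ℝ → E} (hf : ContinuousOn f (Icc 0 T))
    {s t : ℝ} (hs : s ∈ Icc (0:ℝ) T) (ht : t ∈ Icc (0:ℝ) T) (m : ℕ)
    (hst : |s - t| ≤ T / 2 ^ m) :
    edist (f s) (f t) ≤ 2 * dyTail T f m := by
  rcases le_total t s with h | h
  · exact chain_cont_aux hT hf hs ht m (le_trans (le_abs_self _) hst) h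
  · rw [edist_comm]
    rw [abs_sub_comm] at hst
    exact chain_cont_aux hT hf ht hs m (le_trans (le_abs_self _) hst) h

lemma exists_dyadic_scale {T r : ℝ} (hT : 0 < T) (h0 : 0 < r) (hr : r ≤ T) :
    ∃ m : ℕ, r ≤ T / 2 ^ m ∧ T / 2 ^ (m + 1) < r := by
  have hex : ∃ k : ℕ, T / 2 ^ k < r := by
    obtain ⟨k, hk⟩ := pow_unbounded_of_one_lt (T / r) (one_lt_two (α := ℝ))
    refine ⟨k, ?_⟩
    rw [div_lt_iff₀ (by positivity : (0:ℝ) < 2 ^ k)]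
    rw [div_lt_iff₀ h0] at hk
    rw [mul_comm]
    exact hk
  classical
  have hk : T / 2 ^ (Nat.find hex) < r := Nat.find_spec hex
  have hkpos : Nat.find hex ≠ 0 := by
    intro h
    rw [h] at hk
    simp only [pow_zero, div_one] at hk
    linarith
  obtain ⟨m, hm⟩ : ∃ m, Nat.find hex = m + 1 := ⟨Nat.find hex - 1, by omega⟩
  rw [hm] at hk
  refine ⟨m, ?_, hk⟩
  have := Nat.find_min hex (m := m) (by omega)
  exact not_lt.1 this

/-- Weighted sum of dyadic increments. -/
noncomputable def Wsum (T a : ℝ) (f : ℝ → E) : ℝ≥0∞ :=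
  ∑' n : ℕ, ENNReal.ofReal ((2:ℝ) ^ ((n:ℝ) * a)) * Mdy T f n

lemma dyTail_le_Wsum {T a : ℝ} (ha : 0 ≤ a) (f : ℝ → E) (m : ℕ) :
    ENNReal.ofReal ((2:ℝ) ^ ((m:ℝ) * a)) * dyTail T f m ≤ Wsum T a f := by
  rw [dyTail, ← ENNReal.tsum_mul_left]
  calc ∑' j : ℕ, ENNReal.ofReal ((2:ℝ) ^ ((m:ℝ)*a)) * Mdy T f (m + j)
      ≤ ∑' j : ℕ, ENNReal.ofReal ((2:ℝ) ^ (((m + j : ℕ):ℝ)*a)) * Mdy T f (m + j) := by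
        refine ENNReal.tsum_le_tsum fun j => mul_le_mul_left (ENNReal.ofReal_le_ofReal ?_) _
        refine Real.rpow_le_rpow_of_exponent_le one_le_two ?_
        push_cast
        have hj : (0:ℝ) ≤ (j:ℝ) := Nat.cast_nonneg j
        nlinarith
      _ ≤ Wsum T a f :=
        ENNReal.tsum_comp_le_tsum_of_injective (add_right_injective m)
          (fun n => ENNReal.ofReal ((2:ℝ) ^ ((n:ℝ)*a)) * Mdy T f n)

lemma path_semi_le {T a : ℝ} (hT : 0 < T) (ha : 0 ≤ a) {f : ℝ → E}
    (hf : ContinuousOn f (Icc 0 T)) :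
    holderSemiOn T a f ≤ ENNReal.ofReal (2 * (2:ℝ) ^ a / T ^ a) * Wsum T a f := by
  refine iSup_le fun s => iSup_le fun t => iSup_le fun hs => iSup_le fun ht =>
    iSup_le fun hst => ?_
  have habs : 0 < |s - t| := abs_pos.2 (sub_ne_zero.2 hst)
  have habsT : |s - t| ≤ T := by
    rw [abs_sub_le_iff]
    constructor <;> linarith [hs.1, hs.2, ht.1, ht.2]
  obtain ⟨m, hm1, hm2⟩ := exists_dyadic_scale hT habs habsT
  have hchain : (‖f s - f t‖₊ : ℝ≥0∞) ≤ 2 * dyTail T f m := by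
    rw [← enorm_eq_nnnorm, ← edist_eq_enorm_sub]
    exact chain_cont hT hf hs ht m hm1
  set w := ENNReal.ofReal ((2:ℝ) ^ ((m:ℝ) * a)) with hw
  have hw0 : w ≠ 0 := ofReal_rpow_ne_zero two_pos _
  have hwtop : w ≠ ⊤ := ENNReal.ofReal_ne_top
  have htail : dyTail T f m ≤ w⁻¹ * Wsum T a f := by
    calc dyTail T f m = w⁻¹ * (w * dyTail T f m) := by
          rw [← mul_assoc, ENNReal.inv_mul_cancel hw0 hwtop, one_mul]
      _ ≤ w⁻¹ * Wsum T a f := mul_le_mul_right (dyTail_le_Wsum ha f m) _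
  have hden : ENNReal.ofReal (|s - t| ^ a) ≠ 0 := ofReal_rpow_ne_zero habs a
  rw [ENNReal.div_le_iff hden ENNReal.ofReal_ne_top]
  have hfin : (2 : ℝ≥0∞) * w⁻¹
      ≤ ENNReal.ofReal (2 * (2:ℝ) ^ a / T ^ a) * ENNReal.ofReal (|s - t| ^ a) := by
    have hTa : (0:ℝ) < T ^ a := Real.rpow_pos_of_pos hT a
    have h2ma : (0:ℝ) < (2:ℝ) ^ ((m:ℝ) * a) := Real.rpow_pos_of_pos two_pos _
    have hwi : w⁻¹ = ENNReal.ofReal (((2:ℝ) ^ ((m:ℝ) * a))⁻¹) := by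
      rw [hw, ← ENNReal.ofReal_inv_of_pos h2ma]
    rw [hwi, show (2 : ℝ≥0∞) = ENNReal.ofReal 2 by norm_num,
      ← ENNReal.ofReal_mul (by norm_num), ← ENNReal.ofReal_mul (by positivity)]
    refine ENNReal.ofReal_le_ofReal ?_
    have hkey : 2 * ((2:ℝ) ^ ((m:ℝ) * a))⁻¹ = 2 * (2:ℝ) ^ a / T ^ a * (T / 2 ^ (m+1)) ^ a := by
      rw [Real.div_rpow hT.le (by positivity : (0:ℝ) ≤ 2 ^ (m+1))]
      have h2m1 : ((2:ℝ) ^ (m+1)) ^ a = (2:ℝ) ^ (((m:ℝ) + 1) * a) := by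
        rw [← Real.rpow_natCast (2:ℝ) (m+1), ← Real.rpow_mul (by norm_num)]
        push_cast
        ring_nf
      rw [h2m1, show ((m:ℝ) + 1) * a = (m:ℝ) * a + a by ring, Real.rpow_add two_pos]
      have h2a : (0:ℝ) < (2:ℝ) ^ a := Real.rpow_pos_of_pos two_pos a
      field_simp
    rw [hkey]
    have hmono : (T / 2 ^ (m+1)) ^ a ≤ |s - t| ^ a :=
      Real.rpow_le_rpow (by positivity) hm2.le ha
    have hc : (0:ℝ) ≤ 2 * (2:ℝ) ^ a / T ^ a := by positivity
    exact mul_le_mul_of_nonneg_left hmono hc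
  calc (‖f s - f t‖₊ : ℝ≥0∞) ≤ 2 * dyTail T f m := hchain
    _ ≤ 2 * (w⁻¹ * Wsum T a f) := mul_le_mul_right htail 2
    _ = (2 * w⁻¹) * Wsum T a f := by rw [mul_assoc]
    _ ≤ (ENNReal.ofReal (2 * (2:ℝ) ^ a / T ^ a) * ENNReal.ofReal (|s - t| ^ a)) * Wsum T a f :=
        mul_le_mul_left hfin _
    _ = ENNReal.ofReal (2 * (2:ℝ) ^ a / T ^ a) * Wsum T a f * ENNReal.ofReal (|s - t| ^ a) := by
        ring

lemma path_sup_le {T a : ℝ} (hT : 0 < T) (ha : 0 ≤ a) (f : ℝ → E) :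
    supNormOn T f ≤ (‖f 0‖₊ : ℝ≥0∞) + holderSemiOn T a f * ENNReal.ofReal (T ^ a) := by
  refine iSup_le fun t => iSup_le fun ht => ?_
  by_cases h0 : t = 0
  · subst h0; exact le_self_add
  · have htri : ‖f t‖₊ ≤ ‖f 0‖₊ + ‖f t - f 0‖₊ := by
      simpa using nnnorm_add_le (f 0) (f t - f 0)
    have hterm : (‖f t - f 0‖₊ : ℝ≥0∞)
        ≤ holderSemiOn T a f * ENNReal.ofReal (|t - 0| ^ a) := by
      have hle : (‖f t - f 0‖₊ : ℝ≥0∞) / ENNReal.ofReal (|t - 0| ^ a) ≤ holderSemiOn T a f :=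
        le_iSup_of_le t <| le_iSup_of_le 0 <| le_iSup_of_le ht <|
          le_iSup_of_le ⟨le_rfl, hT.le⟩ <| le_iSup_of_le h0 le_rfl
      exact (ENNReal.div_le_iff
        (ofReal_rpow_ne_zero (abs_pos.2 (sub_ne_zero.2 h0)) a) ENNReal.ofReal_ne_top).1 hle
    have habs : |t - 0| ^ a ≤ T ^ a := by
      rw [sub_zero, abs_of_nonneg ht.1]
      exact Real.rpow_le_rpow ht.1 ht.2 ha
    calc (‖f t‖₊ : ℝ≥0∞) ≤ (‖f 0‖₊ : ℝ≥0∞) + (‖f t - f 0‖₊ : ℝ≥0∞) := by exact_mod_cast htri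
      _ ≤ (‖f 0‖₊ : ℝ≥0∞) + holderSemiOn T a f * ENNReal.ofReal (|t - 0| ^ a) :=
          add_le_add le_rfl hterm
      _ ≤ _ := add_le_add le_rfl (mul_le_mul_right (ENNReal.ofReal_le_ofReal habs) _)

end chain2

/-! #### integral (Minkowski) lemmas -/

section integrals
variable {Ω : Type} [MeasurableSpace Ω] {P : Measure Ω}

lemma rpow_iSup {q : ℝ} (hq : 0 < q) (g : ℕ → ℝ≥0∞) : (⨆ n, g n) ^ q = ⨆ n, (g n) ^ q := by
  apply le_antisymm
  · have h : ∀ n, g n ≤ (⨆ n, (g n) ^ q) ^ (1/q) := fun n => by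
      calc g n = ((g n) ^ q) ^ (1/q) := by
            rw [← ENNReal.rpow_mul, mul_one_div, div_self hq.ne', ENNReal.rpow_one]
        _ ≤ _ := ENNReal.rpow_le_rpow (le_iSup (fun n => (g n) ^ q) n) (by positivity)
    calc (⨆ n, g n) ^ q ≤ ((⨆ n, (g n) ^ q) ^ (1/q)) ^ q :=
          ENNReal.rpow_le_rpow (iSup_le h) hq.le
      _ = ⨆ n, (g n) ^ q := by
          rw [← ENNReal.rpow_mul, one_div_mul_cancel hq.ne', ENNReal.rpow_one]
  · exact iSup_le fun n => ENNReal.rpow_le_rpow (le_iSup g n) hq.le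

lemma lp_sum_le {ι : Type*} {p : ℝ} (hp : 1 ≤ p) (s : Finset ι) (g : ι → Ω → ℝ≥0∞)
    (hg : ∀ i, Measurable (g i)) :
    (∫⁻ ω, (∑ i ∈ s, g i ω) ^ p ∂P) ^ (1/p) ≤ ∑ i ∈ s, (∫⁻ ω, (g i ω) ^ p ∂P) ^ (1/p) := by
  classical
  have hp0 : 0 < p := lt_of_lt_of_le one_pos hp
  induction s using Finset.induction with
  | empty =>
      have h1 : ((0:ℝ≥0∞)) ^ p = 0 := ENNReal.zero_rpow_of_pos hp0
      have h2 : ((0:ℝ≥0∞)) ^ (1/p) = 0 := ENNReal.zero_rpow_of_pos (by positivity)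
      simp only [Finset.sum_empty, h1, lintegral_zero, h2, le_refl]
  | insert _ _ h ih =>
      rename_i i s'
      simp only [Finset.sum_insert h]
      refine (ENNReal.lintegral_Lp_add_le (hg i).aemeasurable
        ((Finset.measurable_sum s' fun j _ => hg j).aemeasurable) hp).trans
        (add_le_add le_rfl ih)

lemma lp_tsum_le {p : ℝ} (hp : 1 ≤ p) (g : ℕ → Ω → ℝ≥0∞) (hg : ∀ n, Measurable (g n)) :
    (∫⁻ ω, (∑' n, g n ω) ^ p ∂P) ^ (1/p) ≤ ∑' n, (∫⁻ ω, (g n ω) ^ p ∂P) ^ (1/p) := by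
  have hp0 : 0 < p := lt_of_lt_of_le one_pos hp
  have h2 : (∫⁻ ω, (∑' n, g n ω) ^ p ∂P)
      = ⨆ K, ∫⁻ ω, (∑ n ∈ Finset.range K, g n ω) ^ p ∂P := by
    calc ∫⁻ ω, (∑' n, g n ω) ^ p ∂P
        = ∫⁻ ω, ⨆ K, (∑ n ∈ Finset.range K, g n ω) ^ p ∂P := by
          refine lintegral_congr fun ω => ?_
          rw [ENNReal.tsum_eq_iSup_nat, rpow_iSup hp0]
      _ = ⨆ K, ∫⁻ ω, (∑ n ∈ Finset.range K, g n ω) ^ p ∂P := by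
          refine lintegral_iSup (fun K => ?_) (fun i j hij ω => ?_)
          · exact (Finset.measurable_sum _ fun n _ => hg n).pow_const p
          · exact ENNReal.rpow_le_rpow
              (Finset.sum_le_sum_of_subset (Finset.range_subset_range.2 hij)) hp0.le
  rw [h2, rpow_iSup (by positivity : (0:ℝ) < 1/p)]
  exact iSup_le fun K => (lp_sum_le hp _ g hg).trans
    (ENNReal.sum_le_tsum (f := fun n => (∫⁻ ω, (g n ω) ^ p ∂P) ^ (1/p)) _)

lemma measurable_finsup {ι : Type*} (s : Finset ι) (g : ι → Ω → ℝ≥0∞)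
    (hg : ∀ i ∈ s, Measurable (g i)) :
    Measurable fun ω => s.sup fun i => g i ω := by
  classical
  induction s using Finset.induction with
  | empty => simpa using measurable_const
  | insert _ _ h ih =>
      simp only [Finset.sup_insert]
      exact (hg _ (Finset.mem_insert_self _ _)).sup
        (ih fun i hi => hg i (Finset.mem_insert_of_mem hi))

end integrals



/-! #### a quantitative Kolmogorov-type estimate -/

section kolmo
variable {Ω E : Type} [MeasurableSpace Ω] [NormedAddCommGroup E] {P : Measure Ω}

lemma lp_const_mul {p : ℝ} (hp0 : 0 < p) (c : ℝ≥0∞) (g : Ω → ℝ≥0∞) (hg : Measurable g) :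
    (∫⁻ ω, (c * g ω) ^ p ∂P) ^ (1/p) = c * (∫⁻ ω, (g ω) ^ p ∂P) ^ (1/p) := by
  simp_rw [ENNReal.mul_rpow_of_nonneg _ _ hp0.le]
  rw [lintegral_const_mul _ (hg.pow_const p),
    ENNReal.mul_rpow_of_nonneg _ _ (by positivity : (0:ℝ) ≤ 1/p),
    ← ENNReal.rpow_mul, mul_one_div, div_self hp0.ne', ENNReal.rpow_one]

lemma kolmogorov_bound (P : Measure Ω) {T p a b : ℝ} (hT : 0 < T) (hp : 1 ≤ p)
    (ha : 0 ≤ a) (hab : a + 1/p < b) :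
    ∃ C : ℝ≥0∞, C ≠ ⊤ ∧ ∀ (X : ℝ → Ω → E),
      (∀ t ∈ Icc (0:ℝ) T, StronglyMeasurable (X t)) →
      (∀ ω, ContinuousOn (fun t => X t ω) (Icc (0:ℝ) T)) →
      lpOfHolderNorm P T p a X
        ≤ C * (eLpNorm (X 0) (ENNReal.ofReal p) P + lpHolderSemi P T p b X) := by
  have hp0 : 0 < p := lt_of_lt_of_le one_pos hp
  have hq0 : ENNReal.ofReal p ≠ 0 := by
    simp only [ne_eq, ENNReal.ofReal_eq_zero, not_le]; exact hp0
  have hqt : ENNReal.ofReal p ≠ ⊤ := ENNReal.ofReal_ne_top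
  set qr : ℝ := (2:ℝ) ^ (a + 1/p - b) with hqr
  have hqr0 : 0 < qr := Real.rpow_pos_of_pos two_pos _
  have hqr1 : qr < 1 := Real.rpow_lt_one_of_one_lt_of_neg one_lt_two (by linarith)
  have hsum : Summable fun n : ℕ => qr ^ n := summable_geometric_of_lt_one hqr0.le hqr1
  set C1 : ℝ≥0∞ := ENNReal.ofReal (2 * (2:ℝ) ^ a / T ^ a) with hC1
  set C2 : ℝ≥0∞ := (1 + ENNReal.ofReal (T ^ a)) * C1 with hC2
  set CW : ℝ≥0∞ := ENNReal.ofReal (T ^ b) * ENNReal.ofReal (∑' n : ℕ, qr ^ n) with hCW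
  have hC2top : C2 ≠ ⊤ :=
    ENNReal.mul_ne_top (by simp [ENNReal.add_ne_top]) ENNReal.ofReal_ne_top
  have hCWtop : CW ≠ ⊤ := ENNReal.mul_ne_top ENNReal.ofReal_ne_top ENNReal.ofReal_ne_top
  refine ⟨1 + C2 * CW, by simp [ENNReal.add_ne_top, ENNReal.mul_ne_top hC2top hCWtop], ?_⟩
  intro X hmeas hcont
  set K := lpHolderSemi P T p b X with hK
  have hedist : ∀ n : ℕ, ∀ k : ℕ, k + 1 ≤ 2 ^ n →
      Measurable (fun ω => edist (X (gridPt T n (k+1)) ω) (X (gridPt T n k) ω)) := by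
    intro n k hk
    simp_rw [edist_eq_enorm_sub]
    exact ((hmeas _ (gridPt_mem hT hk)).sub (hmeas _ (gridPt_mem hT (by omega)))).enorm
  have hMmeas : ∀ n, Measurable (fun ω => Mdy T (fun t => X t ω) n) := by
    intro n
    refine measurable_finsup _ _ fun k hk => ?_
    exact hedist n k (Finset.mem_range.1 hk)
  have hWmeas : Measurable (fun ω => Wsum T a (fun t => X t ω)) :=
    Measurable.ennreal_tsum fun n => (hMmeas n).const_mul _
  -- pathwise bound
  have hpath : ∀ ω, holderNormOn T a (fun t => X t ω)
      ≤ (‖X 0 ω‖₊ : ℝ≥0∞) + C2 * Wsum T a (fun t => X t ω) := by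
    intro ω
    have hsemi := path_semi_le hT ha (hcont ω)
    have hsup := path_sup_le (a := a) hT ha (fun t => X t ω)
    calc holderNormOn T a (fun t => X t ω)
        = supNormOn T (fun t => X t ω) + holderSemiOn T a (fun t => X t ω) := rfl
      _ ≤ ((‖X 0 ω‖₊ : ℝ≥0∞) + holderSemiOn T a (fun t => X t ω) * ENNReal.ofReal (T ^ a))
          + holderSemiOn T a (fun t => X t ω) := add_le_add hsup le_rfl
      _ = (‖X 0 ω‖₊ : ℝ≥0∞)
          + holderSemiOn T a (fun t => X t ω) * (1 + ENNReal.ofReal (T ^ a)) := by ring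
      _ ≤ (‖X 0 ω‖₊ : ℝ≥0∞)
          + C1 * Wsum T a (fun t => X t ω) * (1 + ENNReal.ofReal (T ^ a)) :=
          add_le_add le_rfl (mul_le_mul_left hsemi _)
      _ = (‖X 0 ω‖₊ : ℝ≥0∞) + C2 * Wsum T a (fun t => X t ω) := by rw [hC2]; ring
  -- split the Lp norm
  have hsplit : lpOfHolderNorm P T p a X
      ≤ eLpNorm (X 0) (ENNReal.ofReal p) P
        + C2 * (∫⁻ ω, (Wsum T a fun t => X t ω) ^ p ∂P) ^ (1/p) := by
    have h1 : lpOfHolderNorm P T p a X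
        ≤ (∫⁻ ω, ((‖X 0 ω‖₊ : ℝ≥0∞) + C2 * Wsum T a (fun t => X t ω)) ^ p ∂P) ^ (1/p) := by
      rw [lpOfHolderNorm]
      exact ENNReal.rpow_le_rpow
        (lintegral_mono fun ω => ENNReal.rpow_le_rpow (hpath ω) hp0.le) (by positivity)
    refine h1.trans ?_
    have h2 := ENNReal.lintegral_Lp_add_le (μ := P)
      (f := fun ω => (‖X 0 ω‖₊ : ℝ≥0∞)) (g := fun ω => C2 * Wsum T a fun t => X t ω)
      ((hmeas 0 ⟨le_rfl, hT.le⟩).enorm.aemeasurable)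
      ((hWmeas.const_mul _).aemeasurable) hp
    refine h2.trans ?_
    have he : (∫⁻ ω, (‖X 0 ω‖₊ : ℝ≥0∞) ^ p ∂P) ^ (1/p)
        = eLpNorm (X 0) (ENNReal.ofReal p) P := by
      rw [eLpNorm_eq_lintegral_rpow_enorm_toReal hq0 hqt, ENNReal.toReal_ofReal hp0.le]
      rfl
    rw [he, lp_const_mul hp0 C2 _ hWmeas]
  -- moment bound for each dyadic level
  have hMom : ∀ n : ℕ, (∫⁻ ω, (Mdy T (fun t => X t ω) n) ^ p ∂P) ^ (1/p)
      ≤ ENNReal.ofReal ((2:ℝ) ^ ((n:ℝ)/p)) * (K * ENNReal.ofReal ((T / 2^n) ^ b)) := by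
    intro n
    have hpt : ∀ ω, (Mdy T (fun t => X t ω) n) ^ p
        ≤ ∑ k ∈ Finset.range (2^n),
            (edist (X (gridPt T n (k+1)) ω) (X (gridPt T n k) ω)) ^ p := by
      intro ω
      obtain ⟨k0, hk0, hksup⟩ := Finset.exists_mem_eq_sup (Finset.range (2^n))
        (Finset.nonempty_range_iff.2 (pow_pos (by norm_num : (0:ℕ) < 2) n).ne')
        (fun k => edist (X (gridPt T n (k+1)) ω) (X (gridPt T n k) ω))
      rw [Mdy, hksup]
      exact Finset.single_le_sum (f := fun k =>
        (edist (X (gridPt T n (k+1)) ω) (X (gridPt T n k) ω)) ^ p)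
        (fun _ _ => zero_le) hk0
    have h1 : (∫⁻ ω, (Mdy T (fun t => X t ω) n) ^ p ∂P)
        ≤ ∑ k ∈ Finset.range (2^n),
            ∫⁻ ω, (edist (X (gridPt T n (k+1)) ω) (X (gridPt T n k) ω)) ^ p ∂P := by
      refine (lintegral_mono hpt).trans (le_of_eq ?_)
      exact lintegral_finset_sum _ fun k hk =>
        (hedist n k (Finset.mem_range.1 hk)).pow_const p
    have h2 : ∀ k ∈ Finset.range (2^n),
        (∫⁻ ω, (edist (X (gridPt T n (k+1)) ω) (X (gridPt T n k) ω)) ^ p ∂P)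
          ≤ (K * ENNReal.ofReal ((T/2^n) ^ b)) ^ p := by
      intro k hk
      have hk' : k + 1 ≤ 2^n := Finset.mem_range.1 hk
      have hmem1 : gridPt T n (k+1) ∈ Icc (0:ℝ) T := gridPt_mem hT hk'
      have hmem2 : gridPt T n k ∈ Icc (0:ℝ) T := gridPt_mem hT (by omega)
      have hdiff : gridPt T n (k+1) - gridPt T n k = T / 2^n := by
        unfold gridPt
        push_cast
        field_simp
        ring
      have hpos : (0:ℝ) < T / 2^n := by positivity
      have hne : gridPt T n (k+1) ≠ gridPt T n k := by
        intro hcontra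
        rw [hcontra, sub_self] at hdiff
        linarith
      have hdist : |gridPt T n (k+1) - gridPt T n k| = T / 2^n := by
        rw [hdiff, abs_of_pos hpos]
      have hel := eLpNorm_le_of_lpHolderSemi (P := P) (T := T) (p := p) (r := b) (X := X)
        hmem1 hmem2 hne
      rw [hdist] at hel
      have heq : ∫⁻ ω, (edist (X (gridPt T n (k+1)) ω) (X (gridPt T n k) ω)) ^ p ∂P
          = (eLpNorm (fun ω => X (gridPt T n (k+1)) ω - X (gridPt T n k) ω)
              (ENNReal.ofReal p) P) ^ p := by
        rw [eLpNorm_eq_lintegral_rpow_enorm_toReal hq0 hqt, ENNReal.toReal_ofReal hp0.le,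
          ← ENNReal.rpow_mul, one_div_mul_cancel hp0.ne', ENNReal.rpow_one]
        simp_rw [edist_eq_enorm_sub]
      rw [heq]
      exact ENNReal.rpow_le_rpow hel hp0.le
    calc (∫⁻ ω, (Mdy T (fun t => X t ω) n) ^ p ∂P) ^ (1/p)
        ≤ (∑ k ∈ Finset.range (2^n), (K * ENNReal.ofReal ((T/2^n) ^ b)) ^ p) ^ (1/p) :=
          ENNReal.rpow_le_rpow (h1.trans (Finset.sum_le_sum h2)) (by positivity)
      _ = (((2:ℝ≥0∞)^n) * (K * ENNReal.ofReal ((T/2^n) ^ b)) ^ p) ^ (1/p) := by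
          rw [Finset.sum_const, Finset.card_range, nsmul_eq_mul]
          norm_cast
      _ = ((2:ℝ≥0∞)^n) ^ (1/p) * (K * ENNReal.ofReal ((T/2^n) ^ b)) := by
          rw [ENNReal.mul_rpow_of_nonneg _ _ (by positivity : (0:ℝ) ≤ 1/p),
            ← ENNReal.rpow_mul, mul_one_div, div_self hp0.ne', ENNReal.rpow_one]
      _ = ENNReal.ofReal ((2:ℝ) ^ ((n:ℝ)/p)) * (K * ENNReal.ofReal ((T/2^n) ^ b)) := by
          congr 1
          rw [show ((2:ℝ≥0∞)^n) = ENNReal.ofReal ((2:ℝ)^n) by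
              rw [ENNReal.ofReal_pow (by norm_num)]; norm_num,
            ENNReal.ofReal_rpow_of_pos (by positivity)]
          congr 1
          rw [← Real.rpow_natCast (2:ℝ) n, ← Real.rpow_mul (by norm_num)]
          rw [mul_one_div]
  -- scalar identity
  have hscal : ∀ n : ℕ,
      (2:ℝ) ^ ((n:ℝ)*a) * ((2:ℝ) ^ ((n:ℝ)/p) * (T/2^n) ^ b) = T ^ b * qr ^ n := by
    intro n
    have hdiv : (T/2^n) ^ b = T ^ b / (2:ℝ) ^ ((n:ℝ)*b) := by
      rw [Real.div_rpow hT.le (by positivity : (0:ℝ) ≤ 2^n),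
        show ((2:ℝ)^n) = (2:ℝ)^((n:ℕ):ℝ) from (Real.rpow_natCast 2 n).symm,
        ← Real.rpow_mul (by norm_num)]
    have hqrn : qr ^ n = (2:ℝ) ^ ((a + 1/p - b)*(n:ℝ)) := by
      rw [hqr, ← Real.rpow_natCast ((2:ℝ)^(a+1/p-b)) n, ← Real.rpow_mul (by norm_num)]
    rw [hdiv, hqrn]
    have hmul : (2:ℝ) ^ ((a + 1/p - b)*(n:ℝ)) * (2:ℝ) ^ ((n:ℝ)*b)
        = (2:ℝ) ^ ((n:ℝ)*a) * (2:ℝ) ^ ((n:ℝ)/p) := by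
      rw [← Real.rpow_add two_pos, ← Real.rpow_add two_pos]
      congr 1
      ring
    have h2nb : (0:ℝ) < (2:ℝ) ^ ((n:ℝ)*b) := Real.rpow_pos_of_pos two_pos _
    have hre : (2:ℝ) ^ ((n:ℝ)*a) * ((2:ℝ) ^ ((n:ℝ)/p) * (T ^ b / (2:ℝ) ^ ((n:ℝ)*b)))
        = ((2:ℝ) ^ ((n:ℝ)*a) * (2:ℝ) ^ ((n:ℝ)/p) * T ^ b) / (2:ℝ) ^ ((n:ℝ)*b) := by ring
    rw [hre, div_eq_iff h2nb.ne']
    linear_combination (-(T ^ b)) * hmul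
  -- sum the moment bounds
  have hW : (∫⁻ ω, (Wsum T a fun t => X t ω) ^ p ∂P) ^ (1/p) ≤ CW * K := by
    have h0 := lp_tsum_le (P := P) hp
      (fun n ω => ENNReal.ofReal ((2:ℝ) ^ ((n:ℝ)*a)) * Mdy T (fun t => X t ω) n)
      (fun n => (hMmeas n).const_mul _)
    refine le_trans (le_of_eq rfl) (h0.trans ?_)
    calc ∑' n : ℕ, (∫⁻ ω, (ENNReal.ofReal ((2:ℝ) ^ ((n:ℝ)*a))
            * Mdy T (fun t => X t ω) n) ^ p ∂P) ^ (1/p)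
        = ∑' n : ℕ, ENNReal.ofReal ((2:ℝ) ^ ((n:ℝ)*a))
            * (∫⁻ ω, (Mdy T (fun t => X t ω) n) ^ p ∂P) ^ (1/p) := by
          congr 1
          funext n
          exact lp_const_mul hp0 _ _ (hMmeas n)
      _ ≤ ∑' n : ℕ, ENNReal.ofReal ((2:ℝ) ^ ((n:ℝ)*a))
            * (ENNReal.ofReal ((2:ℝ) ^ ((n:ℝ)/p)) * (K * ENNReal.ofReal ((T / 2^n) ^ b))) :=
          ENNReal.tsum_le_tsum fun n => mul_le_mul_right (hMom n) _
      _ = ∑' n : ℕ, ENNReal.ofReal (T ^ b) * (ENNReal.ofReal (qr ^ n) * K) := by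
          congr 1
          funext n
          calc ENNReal.ofReal ((2:ℝ) ^ ((n:ℝ)*a))
              * (ENNReal.ofReal ((2:ℝ) ^ ((n:ℝ)/p)) * (K * ENNReal.ofReal ((T / 2^n) ^ b)))
              = (ENNReal.ofReal ((2:ℝ) ^ ((n:ℝ)*a)) * (ENNReal.ofReal ((2:ℝ) ^ ((n:ℝ)/p))
                  * ENNReal.ofReal ((T / 2^n) ^ b))) * K := by ring
            _ = ENNReal.ofReal ((2:ℝ) ^ ((n:ℝ)*a) * ((2:ℝ) ^ ((n:ℝ)/p) * (T / 2^n) ^ b)) * K := by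
                rw [ENNReal.ofReal_mul (by positivity : (0:ℝ) ≤ (2:ℝ) ^ ((n:ℝ)*a)),
                  ENNReal.ofReal_mul (by positivity : (0:ℝ) ≤ (2:ℝ) ^ ((n:ℝ)/p))]
            _ = ENNReal.ofReal (T ^ b * qr ^ n) * K := by rw [hscal n]
            _ = ENNReal.ofReal (T ^ b) * (ENNReal.ofReal (qr ^ n) * K) := by
                rw [ENNReal.ofReal_mul (by positivity : (0:ℝ) ≤ T ^ b), mul_assoc]
      _ = (ENNReal.ofReal (T ^ b) * (∑' n : ℕ, ENNReal.ofReal (qr ^ n))) * K := by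
          rw [ENNReal.tsum_mul_left, ENNReal.tsum_mul_right, ← mul_assoc]
      _ = CW * K := by
          rw [hCW, ENNReal.ofReal_tsum_of_nonneg (fun n => by positivity) hsum]
  -- final assembly
  calc lpOfHolderNorm P T p a X
      ≤ eLpNorm (X 0) (ENNReal.ofReal p) P
        + C2 * (∫⁻ ω, (Wsum T a fun t => X t ω) ^ p ∂P) ^ (1/p) := hsplit
    _ ≤ eLpNorm (X 0) (ENNReal.ofReal p) P + C2 * (CW * K) :=
        add_le_add le_rfl (mul_le_mul_right hW _)
    _ = eLpNorm (X 0) (ENNReal.ofReal p) P + (C2 * CW) * K := by rw [← mul_assoc]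
    _ ≤ (1 + C2 * CW) * (eLpNorm (X 0) (ENNReal.ofReal p) P + K) := by
        rw [add_mul, one_mul]
        exact add_le_add le_self_add (mul_le_mul_right le_add_self _)

end kolmo



lemma limsup_mul_const (u : ℕ → ℝ≥0∞) (c : ℝ≥0∞) (hc : c ≠ ⊤) :
    limsup (fun n => u n * c) atTop = limsup u atTop * c := by
  rw [show (fun n => u n * c) = fun n => c * u n from funext fun n => mul_comm _ _,
    ENNReal.limsup_const_mul_of_ne_top hc, mul_comm]

lemma floor_grid {T : ℝ} (hT : 0 < T) {t : ℝ} (ht : t ∈ Icc (0:ℝ) T) (j : ℕ) :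
    ∃ k : ℕ, k ≤ 2 ^ j ∧ gridPt T j k ∈ Icc (0:ℝ) T ∧ |t - gridPt T j k| ≤ T / 2 ^ j := by
  have h2j : (0:ℝ) < 2 ^ j := by positivity
  have hnn : 0 ≤ t * 2 ^ j / T := by have := ht.1; positivity
  refine ⟨⌊t * 2 ^ j / T⌋₊, ?_, ?_, ?_⟩
  · have h1 : t * 2 ^ j / T ≤ ((2 ^ j : ℕ) : ℝ) := by
      push_cast
      rw [div_le_iff₀ hT]
      nlinarith [ht.2, h2j.le]
    calc ⌊t * 2 ^ j / T⌋₊ ≤ ⌊((2 ^ j : ℕ) : ℝ)⌋₊ := Nat.floor_le_floor h1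
      _ = 2 ^ j := Nat.floor_natCast _
  · refine ⟨gridPt_nonneg hT _ _, ?_⟩
    unfold gridPt
    rw [div_le_iff₀ h2j]
    have hfl : (⌊t * 2 ^ j / T⌋₊ : ℝ) ≤ t * 2 ^ j / T := Nat.floor_le hnn
    have h1 : (⌊t * 2 ^ j / T⌋₊ : ℝ) * T ≤ t * 2 ^ j / T * T :=
      mul_le_mul_of_nonneg_right hfl hT.le
    rw [div_mul_cancel₀ _ hT.ne'] at h1
    nlinarith [ht.2, h2j.le]
  · have hfl : (⌊t * 2 ^ j / T⌋₊ : ℝ) ≤ t * 2 ^ j / T := Nat.floor_le hnn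
    have hfl' : t * 2 ^ j / T - 1 < (⌊t * 2 ^ j / T⌋₊ : ℝ) := Nat.sub_one_lt_floor _
    have hub : gridPt T j ⌊t * 2 ^ j / T⌋₊ ≤ t := by
      unfold gridPt
      rw [div_le_iff₀ h2j]
      have h1 : (⌊t * 2 ^ j / T⌋₊ : ℝ) * T ≤ t * 2 ^ j / T * T :=
        mul_le_mul_of_nonneg_right hfl hT.le
      rwa [div_mul_cancel₀ _ hT.ne'] at h1
    have hlb : t - T / 2 ^ j < gridPt T j ⌊t * 2 ^ j / T⌋₊ := by
      unfold gridPt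
      rw [lt_div_iff₀ h2j]
      have h1 : (t * 2 ^ j / T - 1) * T < (⌊t * 2 ^ j / T⌋₊ : ℝ) * T :=
        mul_lt_mul_of_pos_right hfl' hT
      rw [sub_mul, div_mul_cancel₀ _ hT.ne', one_mul] at h1
      have h2 : (t - T / 2 ^ j) * 2 ^ j = t * 2 ^ j - T := by field_simp
      linarith
    rw [abs_of_nonneg (by linarith : 0 ≤ t - gridPt T j ⌊t * 2 ^ j / T⌋₊)]
    linarith

lemma tendsto_rpow_div_two_pow {T c : ℝ} (hT : 0 < T) (hc : 0 < c) :
    Tendsto (fun j : ℕ => (T / 2 ^ j) ^ c) atTop (𝓝 0) := by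
  have heq : ∀ j : ℕ, (T / 2 ^ j) ^ c = T ^ c * ((2:ℝ) ^ (-c)) ^ j := by
    intro j
    rw [Real.div_rpow hT.le (by positivity),
      show ((2:ℝ) ^ j) = (2:ℝ) ^ ((j:ℕ):ℝ) from (Real.rpow_natCast 2 j).symm,
      ← Real.rpow_mul (by norm_num),
      show ((2:ℝ) ^ (-c)) ^ j = (2:ℝ) ^ (-c * (j:ℝ)) from by
        rw [← Real.rpow_natCast ((2:ℝ) ^ (-c)) j, ← Real.rpow_mul (by norm_num)],
      div_eq_mul_inv, ← Real.rpow_neg (by norm_num)]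
    congr 1
    ring
  simp_rw [heq]
  have hr0 : (0:ℝ) ≤ (2:ℝ) ^ (-c) := (Real.rpow_pos_of_pos two_pos _).le
  have hr1 : (2:ℝ) ^ (-c) < 1 :=
    Real.rpow_lt_one_of_one_lt_of_neg one_lt_two (by linarith)
  simpa using (_root_.tendsto_pow_atTop_nhds_zero_of_lt_one hr0 hr1).const_mul (T ^ c)


end CorAux

set_option maxHeartbeats 1000000

/-- **Corollary 2.10** (`L^p`-convergence in Hölder norms for a fixed `p`). -/
theorem cor_hoelder23
    {Ω E : Type} [MeasurableSpace Ω] [NormedAddCommGroup E] [NormedSpace ℝ E]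
    [CompleteSpace E]
    (T : ℝ) (hT : 0 < T) (p : ℝ) (hp : 1 ≤ p) (β : ℝ) (hβ : β ∈ Set.Icc (0:ℝ) 1)
    (P : Measure Ω) [IsProbabilityMeasure P]
    (Y : ℕ → ℝ → Ω → E)
    (hYmeas : ∀ N, ∀ t ∈ Set.Icc (0:ℝ) T, StronglyMeasurable (Y N t))
    (hYcont : ∀ N ω, ContinuousOn (fun t => Y N t ω) (Set.Icc (0:ℝ) T))
    (hbdd : limsup (fun N => lpHolderSemi P T p β (Y N)) atTop < ⊤)
    (hconv : ∀ t ∈ Set.Icc (0:ℝ) T,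
        limsup (fun N =>
            eLpNorm (fun ω => Y 0 t ω - Y N t ω) (ENNReal.ofReal p) P) atTop
          = 0) :
    (lpHolderSemi P T p β (Y 0)
        ≤ limsup (fun N => lpHolderSemi P T p β (Y N)) atTop
      ∧ limsup (fun N => lpHolderSemi P T p β (Y N)) atTop < ⊤)
    ∧
    (∀ α ∈ Set.Icc (0:ℝ) 1, α < β →
      limsup (fun N =>
          lpHolderNorm P T p α (fun t ω => Y 0 t ω - Y N t ω)) atTop = 0)
    ∧
    (∀ α ∈ Set.Icc (0:ℝ) 1, α < β - 1 / p →
      limsup (fun N =>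
          lpOfHolderNorm P T p α (fun t ω => Y 0 t ω - Y N t ω)) atTop = 0) := by
  classical
  have hp0 : 0 < p := lt_of_lt_of_le one_pos hp
  set L := limsup (fun N => lpHolderSemi P T p β (Y N)) atTop with hL
  have hq1 : (1:ℝ≥0∞) ≤ ENNReal.ofReal p := ENNReal.one_le_ofReal.2 hp
  have hsm : ∀ N : ℕ, ∀ s ∈ Set.Icc (0:ℝ) T, ∀ t ∈ Set.Icc (0:ℝ) T,
      AEStronglyMeasurable (fun ω => Y N s ω - Y N t ω) P := fun N s hs t ht =>
    ((hYmeas N s hs).sub (hYmeas N t ht)).aestronglyMeasurable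
  -- Part (i)
  have part1 : lpHolderSemi P T p β (Y 0) ≤ L := by
    refine CorAux.lpHolderSemi_le fun s hs t ht hst => ?_
    set w := ENNReal.ofReal (|s - t| ^ β) with hw
    have hw0 : w ≠ 0 := CorAux.ofReal_rpow_ne_zero (abs_pos.2 (sub_ne_zero.2 hst)) β
    rw [ENNReal.div_le_iff hw0 ENNReal.ofReal_ne_top]
    have key : ∀ N : ℕ, eLpNorm (fun ω => Y 0 s ω - Y 0 t ω) (ENNReal.ofReal p) P ≤
        eLpNorm (fun ω => Y 0 s ω - Y N s ω) (ENNReal.ofReal p) P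
          + (lpHolderSemi P T p β (Y N) * w
             + eLpNorm (fun ω => Y 0 t ω - Y N t ω) (ENNReal.ofReal p) P) := by
      intro N
      have hfun : (fun ω => Y 0 s ω - Y 0 t ω)
          = (fun ω => (Y 0 s ω - Y N s ω) + ((Y N s ω - Y N t ω) + (Y N t ω - Y 0 t ω))) := by
        funext ω; abel
      rw [hfun]
      refine (eLpNorm_add_le (((hYmeas 0 s hs).sub (hYmeas N s hs)).aestronglyMeasurable)
        ((((hYmeas N s hs).sub (hYmeas N t ht)).add
          ((hYmeas N t ht).sub (hYmeas 0 t ht))).aestronglyMeasurable) hq1).trans ?_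
      refine add_le_add le_rfl ?_
      refine (eLpNorm_add_le (hsm N s hs t ht)
        (((hYmeas N t ht).sub (hYmeas 0 t ht)).aestronglyMeasurable) hq1).trans ?_
      refine add_le_add (CorAux.eLpNorm_le_of_lpHolderSemi hs ht hst) ?_
      refine le_of_eq ?_
      exact eLpNorm_sub_comm (Y N t) (Y 0 t) _ P
    calc eLpNorm (fun ω => Y 0 s ω - Y 0 t ω) (ENNReal.ofReal p) P
        = limsup (fun _ : ℕ =>
            eLpNorm (fun ω => Y 0 s ω - Y 0 t ω) (ENNReal.ofReal p) P) atTop :=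
          (limsup_const _).symm
      _ ≤ limsup (fun N => eLpNorm (fun ω => Y 0 s ω - Y N s ω) (ENNReal.ofReal p) P
            + (lpHolderSemi P T p β (Y N) * w
               + eLpNorm (fun ω => Y 0 t ω - Y N t ω) (ENNReal.ofReal p) P)) atTop :=
          limsup_le_limsup (Eventually.of_forall key)
      _ ≤ limsup (fun N => eLpNorm (fun ω => Y 0 s ω - Y N s ω) (ENNReal.ofReal p) P) atTop
            + (limsup (fun N => lpHolderSemi P T p β (Y N) * w) atTop
               + limsup (fun N =>
                   eLpNorm (fun ω => Y 0 t ω - Y N t ω) (ENNReal.ofReal p) P) atTop) :=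
          (CorAux.limsup_add_le _ _).trans (add_le_add le_rfl (CorAux.limsup_add_le _ _))
      _ ≤ 0 + (L * w + 0) := by
          rw [hconv s hs, hconv t ht, CorAux.limsup_mul_const _ _ ENNReal.ofReal_ne_top]
      _ = L * w := by simp
  -- Strong measurability of the differences
  have hDmeas : ∀ N : ℕ, ∀ t ∈ Set.Icc (0:ℝ) T,
      StronglyMeasurable (fun ω => Y 0 t ω - Y N t ω) := fun N t ht =>
    (hYmeas 0 t ht).sub (hYmeas N t ht)
  -- triangle inequality for the difference seminorm
  have hDsemi : ∀ (r : ℝ) (N : ℕ), lpHolderSemi P T p r (fun t ω => Y 0 t ω - Y N t ω)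
      ≤ lpHolderSemi P T p r (Y 0) + lpHolderSemi P T p r (Y N) := by
    intro r N
    refine CorAux.lpHolderSemi_le fun s hs t ht hst => ?_
    have hw0 : ENNReal.ofReal (|s - t| ^ r) ≠ 0 :=
      CorAux.ofReal_rpow_ne_zero (abs_pos.2 (sub_ne_zero.2 hst)) r
    rw [ENNReal.div_le_iff hw0 ENNReal.ofReal_ne_top]
    have hfun : (fun ω => (Y 0 s ω - Y N s ω) - (Y 0 t ω - Y N t ω))
        = fun ω => (Y 0 s ω - Y 0 t ω) + (Y N t ω - Y N s ω) := by funext ω; abel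
    calc eLpNorm (fun ω => (Y 0 s ω - Y N s ω) - (Y 0 t ω - Y N t ω)) (ENNReal.ofReal p) P
        = eLpNorm (fun ω => (Y 0 s ω - Y 0 t ω) + (Y N t ω - Y N s ω)) (ENNReal.ofReal p) P :=
          by rw [hfun]
      _ ≤ eLpNorm (fun ω => Y 0 s ω - Y 0 t ω) (ENNReal.ofReal p) P
            + eLpNorm (fun ω => Y N t ω - Y N s ω) (ENNReal.ofReal p) P :=
          eLpNorm_add_le (hsm 0 s hs t ht) (hsm N t ht s hs) hq1
      _ ≤ lpHolderSemi P T p r (Y 0) * ENNReal.ofReal (|s - t| ^ r)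
            + lpHolderSemi P T p r (Y N) * ENNReal.ofReal (|t - s| ^ r) :=
          add_le_add (CorAux.eLpNorm_le_of_lpHolderSemi hs ht hst)
            (CorAux.eLpNorm_le_of_lpHolderSemi ht hs (Ne.symm hst))
      _ = (lpHolderSemi P T p r (Y 0) + lpHolderSemi P T p r (Y N))
            * ENNReal.ofReal (|s - t| ^ r) := by
          rw [abs_sub_comm t s, add_mul]
  -- Part (ii)
  have hpart2 : ∀ α ∈ Set.Icc (0:ℝ) 1, α < β →
      limsup (fun N => lpHolderNorm P T p α (fun t ω => Y 0 t ω - Y N t ω)) atTop = 0 := by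
    intro α hα hαβ
    have hβ0 : 0 < β := lt_of_le_of_lt hα.1 hαβ
    set L0 : ℝ≥0∞ := lpHolderSemi P T p β (Y 0) + L with hL0
    have hL0top : L0 ≠ ⊤ :=
      ENNReal.add_ne_top.2 ⟨(lt_of_le_of_lt part1 hbdd).ne, hbdd.ne⟩
    have hDlim : limsup (fun N =>
        lpHolderSemi P T p β (fun t ω => Y 0 t ω - Y N t ω)) atTop ≤ L0 := by
      refine (limsup_le_limsup (Eventually.of_forall (hDsemi β))).trans ?_
      refine (CorAux.limsup_add_le _ _).trans ?_
      rw [limsup_const]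
    -- uniform convergence of the sup-norms
    have hsup0 : limsup (fun N =>
        lpSupNorm P T p (fun t ω => Y 0 t ω - Y N t ω)) atTop = 0 := by
      refine le_antisymm ?_ (zero_le)
      have hbound : ∀ j N : ℕ,
          lpSupNorm P T p (fun t ω => Y 0 t ω - Y N t ω)
            ≤ (∑ k ∈ Finset.range (2^j + 1),
                eLpNorm (fun ω => Y 0 (CorAux.gridPt T j k) ω - Y N (CorAux.gridPt T j k) ω)
                  (ENNReal.ofReal p) P)
              + lpHolderSemi P T p β (fun t ω => Y 0 t ω - Y N t ω)
                * ENNReal.ofReal ((T / 2^j) ^ β) := by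
        intro j N
        refine CorAux.lpSupNorm_le fun t ht => ?_
        obtain ⟨k, hk2j, hgmem, hgdist⟩ := CorAux.floor_grid hT ht j
        have hmem : k ∈ Finset.range (2^j + 1) := Finset.mem_range.2 (by omega)
        have hsingle : eLpNorm (fun ω => Y 0 (CorAux.gridPt T j k) ω
              - Y N (CorAux.gridPt T j k) ω) (ENNReal.ofReal p) P
            ≤ ∑ k' ∈ Finset.range (2^j + 1),
                eLpNorm (fun ω => Y 0 (CorAux.gridPt T j k') ω - Y N (CorAux.gridPt T j k') ω)
                  (ENNReal.ofReal p) P :=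
          Finset.single_le_sum (f := fun k' => eLpNorm
            (fun ω => Y 0 (CorAux.gridPt T j k') ω - Y N (CorAux.gridPt T j k') ω)
            (ENNReal.ofReal p) P) (fun _ _ => zero_le) hmem
        by_cases heq : t = CorAux.gridPt T j k
        · rw [heq]
          exact le_trans hsingle le_self_add
        · have hfun : (fun ω => Y 0 t ω - Y N t ω)
              = fun ω => (Y 0 (CorAux.gridPt T j k) ω - Y N (CorAux.gridPt T j k) ω)
                + ((Y 0 t ω - Y N t ω)
                  - (Y 0 (CorAux.gridPt T j k) ω - Y N (CorAux.gridPt T j k) ω)) := by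
            funext ω; abel
          calc eLpNorm (fun ω => Y 0 t ω - Y N t ω) (ENNReal.ofReal p) P
              ≤ eLpNorm (fun ω => Y 0 (CorAux.gridPt T j k) ω - Y N (CorAux.gridPt T j k) ω)
                  (ENNReal.ofReal p) P
                + eLpNorm (fun ω => (Y 0 t ω - Y N t ω)
                    - (Y 0 (CorAux.gridPt T j k) ω - Y N (CorAux.gridPt T j k) ω))
                  (ENNReal.ofReal p) P := by
                rw [hfun]
                exact eLpNorm_add_le ((hDmeas N _ hgmem).aestronglyMeasurable)
                  (((hDmeas N t ht).sub (hDmeas N _ hgmem)).aestronglyMeasurable) hq1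
            _ ≤ (∑ k' ∈ Finset.range (2^j + 1),
                  eLpNorm (fun ω => Y 0 (CorAux.gridPt T j k') ω
                    - Y N (CorAux.gridPt T j k') ω) (ENNReal.ofReal p) P)
                + lpHolderSemi P T p β (fun t ω => Y 0 t ω - Y N t ω)
                  * ENNReal.ofReal ((T / 2^j) ^ β) := by
                refine add_le_add hsingle ?_
                refine (CorAux.eLpNorm_le_of_lpHolderSemi (r := β)
                  (X := fun t ω => Y 0 t ω - Y N t ω) ht hgmem heq).trans ?_
                refine mul_le_mul_right (ENNReal.ofReal_le_ofReal ?_) _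
                exact Real.rpow_le_rpow (abs_nonneg _) hgdist hβ0.le
      have hlim : ∀ j : ℕ, limsup (fun N =>
          lpSupNorm P T p (fun t ω => Y 0 t ω - Y N t ω)) atTop
            ≤ L0 * ENNReal.ofReal ((T / 2^j) ^ β) := by
        intro j
        refine (limsup_le_limsup (Eventually.of_forall (hbound j))).trans ?_
        refine (CorAux.limsup_add_le _ _).trans ?_
        have h1 : limsup (fun N => ∑ k ∈ Finset.range (2^j + 1),
            eLpNorm (fun ω => Y 0 (CorAux.gridPt T j k) ω - Y N (CorAux.gridPt T j k) ω)
              (ENNReal.ofReal p) P) atTop ≤ 0 := by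
          refine (CorAux.limsup_sum_le _ _).trans ?_
          refine le_of_eq (Finset.sum_eq_zero fun k hk => ?_)
          exact hconv (CorAux.gridPt T j k)
            (CorAux.gridPt_mem hT (Nat.lt_succ_iff.1 (Finset.mem_range.1 hk)))
        have h2 : limsup (fun N =>
            lpHolderSemi P T p β (fun t ω => Y 0 t ω - Y N t ω)
              * ENNReal.ofReal ((T / 2^j) ^ β)) atTop
            ≤ L0 * ENNReal.ofReal ((T / 2^j) ^ β) := by
          rw [CorAux.limsup_mul_const _ _ ENNReal.ofReal_ne_top]
          exact mul_le_mul_left hDlim _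
        calc _ ≤ 0 + L0 * ENNReal.ofReal ((T / 2^j) ^ β) := add_le_add h1 h2
          _ = L0 * ENNReal.ofReal ((T / 2^j) ^ β) := zero_add _
      have htend : Tendsto (fun j : ℕ => L0 * ENNReal.ofReal ((T / 2^j) ^ β)) atTop (𝓝 0) := by
        have h := ENNReal.tendsto_ofReal (CorAux.tendsto_rpow_div_two_pow hT hβ0)
        simpa using ENNReal.Tendsto.const_mul h (Or.inr hL0top)
      exact ge_of_tendsto htend (Eventually.of_forall hlim)
    have hsupT : Tendsto (fun N =>
        lpSupNorm P T p (fun t ω => Y 0 t ω - Y N t ω)) atTop (𝓝 0) :=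
      CorAux.tendsto_of_limsup_zero hsup0
    -- convergence of the α-seminorms
    have hsemi0 : limsup (fun N =>
        lpHolderSemi P T p α (fun t ω => Y 0 t ω - Y N t ω)) atTop = 0 := by
      refine le_antisymm ?_ (zero_le)
      have hbound : ∀ j N : ℕ,
          lpHolderSemi P T p α (fun t ω => Y 0 t ω - Y N t ω)
            ≤ lpHolderSemi P T p β (fun t ω => Y 0 t ω - Y N t ω)
                * ENNReal.ofReal ((T / 2^j) ^ (β - α))
              + 2 * lpSupNorm P T p (fun t ω => Y 0 t ω - Y N t ω)
                / ENNReal.ofReal ((T / 2^j) ^ α) := by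
        intro j N
        refine CorAux.lpHolderSemi_le fun s hs t ht hst => ?_
        have habs : 0 < |s - t| := abs_pos.2 (sub_ne_zero.2 hst)
        have hTj : (0:ℝ) < T / 2^j := by positivity
        rcases le_total |s - t| (T / 2^j) with hcase | hcase
        · refine le_trans ?_ le_self_add
          rw [ENNReal.div_le_iff (CorAux.ofReal_rpow_ne_zero habs α) ENNReal.ofReal_ne_top]
          refine (CorAux.eLpNorm_le_of_lpHolderSemi (r := β)
            (X := fun t ω => Y 0 t ω - Y N t ω) hs ht hst).trans ?_
          rw [mul_assoc]
          refine mul_le_mul_right ?_ _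
          rw [← ENNReal.ofReal_mul (by positivity : (0:ℝ) ≤ (T / 2^j) ^ (β - α))]
          refine ENNReal.ofReal_le_ofReal ?_
          have hsplit : |s - t| ^ β = |s - t| ^ (β - α) * |s - t| ^ α := by
            rw [← Real.rpow_add habs]
            ring_nf
          rw [hsplit]
          refine mul_le_mul_of_nonneg_right ?_ (Real.rpow_nonneg (abs_nonneg _) α)
          exact Real.rpow_le_rpow (abs_nonneg _) hcase (by linarith)
        · refine le_trans ?_ le_add_self
          have h1 : eLpNorm (fun ω => (Y 0 s ω - Y N s ω) - (Y 0 t ω - Y N t ω))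
              (ENNReal.ofReal p) P
              ≤ 2 * lpSupNorm P T p (fun t ω => Y 0 t ω - Y N t ω) := by
            refine (eLpNorm_sub_le ((hDmeas N s hs).aestronglyMeasurable)
              ((hDmeas N t ht).aestronglyMeasurable) hq1).trans ?_
            rw [two_mul]
            exact add_le_add (CorAux.le_lpSupNorm (X := fun t ω => Y 0 t ω - Y N t ω) hs)
              (CorAux.le_lpSupNorm (X := fun t ω => Y 0 t ω - Y N t ω) ht)
          refine ENNReal.div_le_div h1 ?_
          exact ENNReal.ofReal_le_ofReal (Real.rpow_le_rpow hTj.le hcase hα.1)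
      have hlim : ∀ j : ℕ, limsup (fun N =>
          lpHolderSemi P T p α (fun t ω => Y 0 t ω - Y N t ω)) atTop
            ≤ L0 * ENNReal.ofReal ((T / 2^j) ^ (β - α)) := by
        intro j
        refine (limsup_le_limsup (Eventually.of_forall (hbound j))).trans ?_
        refine (CorAux.limsup_add_le _ _).trans ?_
        have h2 : limsup (fun N =>
            2 * lpSupNorm P T p (fun t ω => Y 0 t ω - Y N t ω)
              / ENNReal.ofReal ((T / 2^j) ^ α)) atTop = 0 := by
          have hc : (2:ℝ≥0∞) / ENNReal.ofReal ((T / 2^j) ^ α) ≠ ⊤ :=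
            (ENNReal.div_lt_top (by norm_num)
              (CorAux.ofReal_rpow_ne_zero (by positivity) α)).ne
          have hfun : (fun N => 2 * lpSupNorm P T p (fun t ω => Y 0 t ω - Y N t ω)
                / ENNReal.ofReal ((T / 2^j) ^ α))
              = fun N => (2 / ENNReal.ofReal ((T / 2^j) ^ α))
                * lpSupNorm P T p (fun t ω => Y 0 t ω - Y N t ω) := by
            funext N
            rw [div_eq_mul_inv, div_eq_mul_inv]
            exact mul_right_comm _ _ _
          rw [hfun]
          have hT2 := ENNReal.Tendsto.const_mul hsupT (Or.inr hc)
          rw [mul_zero] at hT2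
          exact hT2.limsup_eq
        have h1 : limsup (fun N =>
            lpHolderSemi P T p β (fun t ω => Y 0 t ω - Y N t ω)
              * ENNReal.ofReal ((T / 2^j) ^ (β - α))) atTop
            ≤ L0 * ENNReal.ofReal ((T / 2^j) ^ (β - α)) := by
          rw [CorAux.limsup_mul_const _ _ ENNReal.ofReal_ne_top]
          exact mul_le_mul_left hDlim _
        calc _ ≤ L0 * ENNReal.ofReal ((T / 2^j) ^ (β - α)) + 0 := add_le_add h1 h2.le
          _ = L0 * ENNReal.ofReal ((T / 2^j) ^ (β - α)) := add_zero _
      have htend : Tendsto (fun j : ℕ =>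
          L0 * ENNReal.ofReal ((T / 2^j) ^ (β - α))) atTop (𝓝 0) := by
        have h := ENNReal.tendsto_ofReal
          (CorAux.tendsto_rpow_div_two_pow hT (by linarith : (0:ℝ) < β - α))
        simpa using ENNReal.Tendsto.const_mul h (Or.inr hL0top)
      exact ge_of_tendsto htend (Eventually.of_forall hlim)
    refine le_antisymm ?_ (zero_le)
    simp only [lpHolderNorm]
    calc limsup (fun N => lpSupNorm P T p (fun t ω => Y 0 t ω - Y N t ω)
          + lpHolderSemi P T p α (fun t ω => Y 0 t ω - Y N t ω)) atTop
        ≤ limsup (fun N => lpSupNorm P T p (fun t ω => Y 0 t ω - Y N t ω)) atTop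
          + limsup (fun N =>
              lpHolderSemi P T p α (fun t ω => Y 0 t ω - Y N t ω)) atTop :=
          CorAux.limsup_add_le _ _
      _ ≤ 0 + 0 := add_le_add hsup0.le hsemi0.le
      _ = 0 := by simp
  -- Part (iii)
  have hpart3 : ∀ α ∈ Set.Icc (0:ℝ) 1, α < β - 1/p →
      limsup (fun N => lpOfHolderNorm P T p α (fun t ω => Y 0 t ω - Y N t ω)) atTop = 0 := by
    intro α hα hαβ
    have h1p : 0 < 1/p := by positivity
    set b := (α + 1/p + β)/2 with hb
    have hb1 : α + 1/p < b := by rw [hb]; linarith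
    have hb2 : b < β := by rw [hb]; linarith
    have hbIcc : b ∈ Set.Icc (0:ℝ) 1 :=
      ⟨by rw [hb]; linarith [hα.1], by linarith [hβ.2, hb2]⟩
    obtain ⟨C, hCt, hC⟩ := CorAux.kolmogorov_bound (E := E) P hT hp hα.1 hb1
    have h2 := hpart2 b hbIcc hb2
    have hbd : ∀ N : ℕ, lpOfHolderNorm P T p α (fun t ω => Y 0 t ω - Y N t ω)
        ≤ C * lpHolderNorm P T p b (fun t ω => Y 0 t ω - Y N t ω) := by
      intro N
      refine (hC _ (hDmeas N) (fun ω => (hYcont 0 ω).sub (hYcont N ω))).trans ?_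
      refine mul_le_mul_right ?_ _
      simp only [lpHolderNorm]
      refine add_le_add ?_ le_rfl
      exact CorAux.le_lpSupNorm (X := fun t ω => Y 0 t ω - Y N t ω) ⟨le_rfl, hT.le⟩
    refine le_antisymm ?_ (zero_le)
    calc limsup (fun N => lpOfHolderNorm P T p α (fun t ω => Y 0 t ω - Y N t ω)) atTop
        ≤ limsup (fun N =>
            C * lpHolderNorm P T p b (fun t ω => Y 0 t ω - Y N t ω)) atTop :=
          limsup_le_limsup (Eventually.of_forall hbd)
      _ = C * limsup (fun N =>
            lpHolderNorm P T p b (fun t ω => Y 0 t ω - Y N t ω)) atTop :=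
          ENNReal.limsup_const_mul_of_ne_top hCt
      _ = 0 := by rw [h2, mul_zero]
  exact ⟨⟨part1, hbdd⟩, hpart2, hpart3⟩
end

section
/- Let T ∈ (0,∞), let (Ω,F,P) be a probability space, let W : [0,T]×Ω → ℝ be a standard Brownian motion, and for N ∈ ℕ let W^N be the piecewise affine linear interpolation of W on the uniform grid {0, T/N, …, T}. Then for all p ∈ [1,∞) and N ∈ ℕ it holds that sup_{t∈[0,T]} (E[|W_t − W^N_t|^p])^{1/p} = (E[|W_T|^p])^{1/p} / (2·√N). -/
open MeasureTheory ENNReal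

/-- Piecewise affine linear interpolation of `f` on the uniform grid
`{0, T/N, 2T/N, …, T}`. -/
noncomputable def uniformInterp (T : ℝ) (N : ℕ) (f : ℝ → ℝ) : ℝ → ℝ := fun t =>
  (((⌊t * N / T⌋ : ℝ) + 1) - t * N / T) • f (⌊t * N / T⌋ * T / N)
    + (t * N / T - (⌊t * N / T⌋ : ℝ)) • f ((⌊t * N / T⌋ + 1) * T / N)

/-- `W` is a standard Brownian motion on `[0,T]`: it starts at `0`, has
continuous sample paths, independent increments, and centered Gaussian
increments with variance `t - s`. -/
structure IsStandardBM {Ω : Type} [MeasurableSpace Ω] (P : Measure Ω)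
    (T : ℝ) (W : ℝ → Ω → ℝ) : Prop where
  start : ∀ ω, W 0 ω = 0
  meas : ∀ t, Measurable (W t)
  cont : ∀ ω, ContinuousOn (fun t => W t ω) (Set.Icc (0:ℝ) T)
  indep : ∀ (n : ℕ) (t : ℕ → ℝ),
    (∀ i, i ≤ n → t i ∈ Set.Icc (0:ℝ) T) →
    (∀ i, i < n → t i ≤ t (i + 1)) →
    ProbabilityTheory.iIndepFun
      (fun (i : Fin n) (ω : Ω) => W (t (i.val + 1)) ω - W (t i.val) ω) P
  gauss : ∀ s t : ℝ, 0 ≤ s → s ≤ t → t ≤ T →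
    Measure.map (fun ω => W t ω - W s ω) P
      = ProbabilityTheory.gaussianReal 0 (Real.toNNReal (t - s))

section AuxiliaryLemmas

open Real ProbabilityTheory
open scoped NNReal

lemma gaussPDF_conv (a b : ℝ) (ha : 0 < a) (hb : 0 < b) (x : ℝ) :
    ∫ y, gaussianPDFReal 0 a.toNNReal y * gaussianPDFReal 0 b.toNNReal (x - y)
      = gaussianPDFReal 0 (a + b).toNNReal x := by
  have hab : 0 < a + b := by linarith
  have hca : (a.toNNReal : ℝ) = a := Real.coe_toNNReal a ha.le
  have hcb : (b.toNNReal : ℝ) = b := Real.coe_toNNReal b hb.le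
  have hcab : ((a + b).toNNReal : ℝ) = a + b := Real.coe_toNNReal _ hab.le
  set k : ℝ := (a + b) / (2 * a * b) with hk
  have hkpos : 0 < k := by positivity
  set c : ℝ := a * x / (a + b) with hc
  set C : ℝ := (Real.sqrt (2 * π * a))⁻¹ * (Real.sqrt (2 * π * b))⁻¹
      * Real.exp (- x ^ 2 / (2 * (a + b))) with hC
  have h1 : ∀ y, gaussianPDFReal 0 a.toNNReal y * gaussianPDFReal 0 b.toNNReal (x - y)
      = C * Real.exp (- k * (y - c) ^ 2) := by
    intro y
    have hexp : -(y - 0) ^ 2 / (2 * a) + -(x - y - 0) ^ 2 / (2 * b)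
        = -x ^ 2 / (2 * (a + b)) + -k * (y - c) ^ 2 := by
      rw [hk, hc]; field_simp; ring
    simp only [gaussianPDFReal, hca, hcb, hC]
    rw [mul_mul_mul_comm, ← Real.exp_add, hexp, Real.exp_add]
    ring
  rw [integral_congr_ae (Filter.Eventually.of_forall h1), integral_const_mul]
  rw [show (fun y => Real.exp (- k * (y - c) ^ 2)) = fun y => (fun z => Real.exp (- k * z ^ 2)) (y - c) from rfl]
  rw [integral_sub_right_eq_self (fun z => Real.exp (- k * z ^ 2)) c, integral_gaussian]
  rw [gaussianPDFReal, hcab]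
  have h2 : (Real.sqrt (2 * π * a))⁻¹ * (Real.sqrt (2 * π * b))⁻¹ * Real.sqrt (π / k)
      = (Real.sqrt (2 * π * (a + b)))⁻¹ := by
    rw [← Real.sqrt_inv, ← Real.sqrt_inv, ← Real.sqrt_mul (by positivity),
      ← Real.sqrt_mul (by positivity), ← Real.sqrt_inv]
    congr 1
    have hπ : 0 < π := Real.pi_pos
    rw [hk]
    field_simp
  calc C * Real.sqrt (π / k)
      = ((Real.sqrt (2 * π * a))⁻¹ * (Real.sqrt (2 * π * b))⁻¹ * Real.sqrt (π / k))
        * Real.exp (- x ^ 2 / (2 * (a + b))) := by rw [hC]; ring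
    _ = _ := by rw [h2]; ring_nf

lemma gaussPDFReal_le (w : ℝ≥0) (z : ℝ) :
    gaussianPDFReal 0 w z ≤ (Real.sqrt (2 * π * w))⁻¹ := by
  rw [gaussianPDFReal]
  have h1 : Real.exp (-(z - 0) ^ 2 / (2 * w)) ≤ 1 := by
    apply Real.exp_le_one_iff.2
    rcases eq_or_ne (w : ℝ) 0 with h | h
    · simp [h]
    · apply div_nonpos_of_nonpos_of_nonneg (neg_nonpos.mpr (by positivity))
      positivity
  have h2 : (0:ℝ) ≤ (Real.sqrt (2 * π * w))⁻¹ := by positivity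
  calc (Real.sqrt (2 * π * w))⁻¹ * Real.exp (-(z - 0) ^ 2 / (2 * w))
      ≤ (Real.sqrt (2 * π * w))⁻¹ * 1 := by
        exact mul_le_mul_of_nonneg_left h1 h2
    _ = _ := mul_one _

lemma gaussian_conv (v w : ℝ≥0) (hv : v ≠ 0) (hw : w ≠ 0) :
    Measure.map (fun p : ℝ × ℝ => p.1 + p.2)
        ((gaussianReal 0 v).prod (gaussianReal 0 w)) = gaussianReal 0 (v + w) := by
  have hvw : v + w ≠ 0 := fun h => hv (by simpa using (add_eq_zero.mp h).1)
  ext s hs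
  have hmap : ∀ x : ℝ, gaussianReal (0:ℝ) w (Prod.mk x ⁻¹' ((fun p : ℝ × ℝ => p.1 + p.2) ⁻¹' s))
      = ∫⁻ y in s, ENNReal.ofReal (gaussianPDFReal 0 w (y - x)) ∂volume := by
    intro x
    have h1 : gaussianReal (0:ℝ) w (Prod.mk x ⁻¹' ((fun p : ℝ × ℝ => p.1 + p.2) ⁻¹' s))
        = ((gaussianReal (0:ℝ) w).map (fun y => x + y)) s :=
      (Measure.map_apply (measurable_const_add x) hs).symm
    rw [h1, gaussianReal_map_const_add, zero_add, gaussianReal_apply_eq_integral _ hw]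
    have hcg : ∀ y ∈ s, gaussianPDFReal x w y = gaussianPDFReal 0 w (y - x) := by
      intro y _; rw [gaussianPDFReal_sub, zero_add]
    rw [setIntegral_congr_fun hs hcg]
    exact ofReal_integral_eq_lintegral_ofReal
      ((integrable_gaussianPDFReal 0 w).comp_sub_right x).restrict
      (Filter.Eventually.of_forall fun y => gaussianPDFReal_nonneg _ _ _)
  rw [Measure.map_apply measurable_add hs, Measure.prod_apply (measurable_add hs),
    lintegral_congr hmap]
  rw [gaussianReal_of_var_ne_zero 0 hv]
  have hG : Measurable fun x : ℝ => ∫⁻ y in s, ENNReal.ofReal (gaussianPDFReal 0 w (y - x)) ∂volume := by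
    apply Measurable.lintegral_prod_right (f := fun x y => ENNReal.ofReal (gaussianPDFReal 0 w (y - x)))
    exact (measurable_gaussianPDFReal 0 w).comp (measurable_snd.sub measurable_fst) |>.ennreal_ofReal
  rw [lintegral_withDensity_eq_lintegral_mul _ (measurable_gaussianPDF 0 v) hG]
  simp only [Pi.mul_apply]
  have hswap : ∫⁻ x, (gaussianPDF 0 v x * ∫⁻ y in s, ENNReal.ofReal (gaussianPDFReal 0 w (y - x)) ∂volume) ∂volume
      = ∫⁻ y in s, (∫⁻ x, gaussianPDF 0 v x * ENNReal.ofReal (gaussianPDFReal 0 w (y - x)) ∂volume) ∂volume := by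
    have h1 : ∀ x : ℝ, gaussianPDF 0 v x * ∫⁻ y in s, ENNReal.ofReal (gaussianPDFReal 0 w (y - x)) ∂volume
        = ∫⁻ y in s, gaussianPDF 0 v x * ENNReal.ofReal (gaussianPDFReal 0 w (y - x)) ∂volume := by
      intro x
      exact (lintegral_const_mul' _ _ (by rw [gaussianPDF_def]; exact ENNReal.ofReal_ne_top)).symm
    rw [lintegral_congr h1, lintegral_lintegral_swap]
    apply Measurable.aemeasurable
    exact ((measurable_gaussianPDF 0 v).comp measurable_fst).mul
      (((measurable_gaussianPDFReal 0 w).comp (measurable_snd.sub measurable_fst)).ennreal_ofReal)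
  rw [hswap]
  rw [gaussianReal_of_var_ne_zero 0 hvw, withDensity_apply _ hs]
  apply setLIntegral_congr_fun hs
  intro y _
  have hint : Integrable (fun x => gaussianPDFReal 0 v x * gaussianPDFReal 0 w (y - x)) := by
    have hb : Integrable (fun x => gaussianPDFReal 0 w (y - x) * gaussianPDFReal 0 v x) := by
      apply Integrable.bdd_mul (c := (Real.sqrt (2 * π * w))⁻¹) (integrable_gaussianPDFReal 0 v)
      · exact (((measurable_gaussianPDFReal 0 w).comp
          ((measurable_const (a := y)).sub measurable_id))).aestronglyMeasurable
      · refine Filter.Eventually.of_forall fun x => ?_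
        rw [Real.norm_of_nonneg (gaussianPDFReal_nonneg _ _ _)]
        exact gaussPDFReal_le w _
    exact hb.congr (Filter.Eventually.of_forall fun x => mul_comm _ _)
  calc ∫⁻ x, gaussianPDF 0 v x * ENNReal.ofReal (gaussianPDFReal 0 w (y - x)) ∂volume
      = ∫⁻ x, ENNReal.ofReal (gaussianPDFReal 0 v x * gaussianPDFReal 0 w (y - x)) ∂volume := by
        apply lintegral_congr; intro x
        rw [gaussianPDF, ← ENNReal.ofReal_mul (gaussianPDFReal_nonneg _ _ _)]
    _ = ENNReal.ofReal (∫ x, gaussianPDFReal 0 v x * gaussianPDFReal 0 w (y - x)) := by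
        rw [← ofReal_integral_eq_lintegral_ofReal hint]
        exact Filter.Eventually.of_forall fun x =>
          mul_nonneg (gaussianPDFReal_nonneg _ _ _) (gaussianPDFReal_nonneg _ _ _)
    _ = gaussianPDF 0 (v + w) y := by
        have h := gaussPDF_conv (v : ℝ) (w : ℝ) (by positivity : (0:ℝ) < v) (by positivity) y
        simp only [Real.toNNReal_coe] at h
        have h2 : ((v : ℝ) + (w : ℝ)).toNNReal = v + w := by
          rw [← NNReal.coe_add, Real.toNNReal_coe]
        rw [h2] at h
        rw [gaussianPDF, h]

lemma ae_eq_zero_of_map_dirac {Ω : Type} [MeasurableSpace Ω] {P : Measure Ω}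
    {X : Ω → ℝ} (hX : Measurable X) (h : Measure.map X P = Measure.dirac 0) :
    X =ᵐ[P] (fun _ => 0) := by
  have h0 : P (X ⁻¹' ({0}ᶜ)) = 0 := by
    rw [← Measure.map_apply hX (measurableSet_singleton (0:ℝ)).compl, h,
      Measure.dirac_apply' _ (measurableSet_singleton (0:ℝ)).compl]
    simp
  have : ∀ᵐ ω ∂P, ω ∉ X ⁻¹' ({0}ᶜ) := ae_iff.2 (by rw [← h0]; congr 1; ext ω; simp)
  filter_upwards [this] with ω hω
  simpa using hω

lemma indep_gauss_sum {Ω : Type} [MeasurableSpace Ω] (P : Measure Ω) [IsProbabilityMeasure P]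
    {X Y : Ω → ℝ} (hX : Measurable X) (hY : Measurable Y)
    (hind : IndepFun X Y P) {v w : ℝ≥0}
    (hXd : Measure.map X P = gaussianReal 0 v) (hYd : Measure.map Y P = gaussianReal 0 w) :
    Measure.map (fun ω => X ω + Y ω) P = gaussianReal 0 (v + w) := by
  rcases eq_or_ne v 0 with hv | hv
  · subst hv
    rw [gaussianReal_zero_var] at hXd
    have hae := ae_eq_zero_of_map_dirac hX hXd
    have h2 : (fun ω => X ω + Y ω) =ᵐ[P] Y := by
      filter_upwards [hae] with ω hω
      simp [hω]
    rw [Measure.map_congr h2, hYd, zero_add]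
  rcases eq_or_ne w 0 with hw | hw
  · subst hw
    rw [gaussianReal_zero_var] at hYd
    have hae := ae_eq_zero_of_map_dirac hY hYd
    have h2 : (fun ω => X ω + Y ω) =ᵐ[P] X := by
      filter_upwards [hae] with ω hω
      simp [hω]
    rw [Measure.map_congr h2, hXd, add_zero]
  have hpair : Measure.map (fun ω => (X ω, Y ω)) P = (Measure.map X P).prod (Measure.map Y P) :=
    (indepFun_iff_map_prod_eq_prod_map_map hX.aemeasurable hY.aemeasurable).mp hind
  have hcomp : Measure.map (fun ω => X ω + Y ω) P
      = Measure.map (fun p : ℝ × ℝ => p.1 + p.2) (Measure.map (fun ω => (X ω, Y ω)) P) := by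
    rw [Measure.map_map measurable_add (hX.prodMk hY)]
    rfl
  rw [hcomp, hpair, hXd, hYd, gaussian_conv v w hv hw]

/-- `p`-th moment root of the standard Gaussian. -/
noncomputable def gaussMoment (p : ℝ) : ℝ≥0∞ :=
  (∫⁻ x : ℝ, (‖x‖₊ : ℝ≥0∞) ^ p ∂(gaussianReal 0 1)) ^ (1 / p)

lemma eLpNorm_of_gauss {Ω : Type} [MeasurableSpace Ω] (P : Measure Ω)
    {X : Ω → ℝ} (hX : Measurable X) {v : ℝ≥0}
    (hXd : Measure.map X P = gaussianReal 0 v) {p : ℝ} (hp : 1 ≤ p) :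
    eLpNorm X (ENNReal.ofReal p) P = ENNReal.ofReal (Real.sqrt v) * gaussMoment p := by
  have hp0 : (0:ℝ) < p := lt_of_lt_of_le zero_lt_one hp
  have hmeas : Measurable fun x : ℝ => (‖x‖₊ : ℝ≥0∞) ^ p :=
    measurable_nnnorm.coe_nnreal_ennreal.pow_const _
  rw [eLpNorm_eq_lintegral_rpow_enorm_toReal (by simp [hp0, hp0.not_ge]) ENNReal.ofReal_ne_top]
  simp only [enorm_eq_nnnorm]
  rw [ENNReal.toReal_ofReal hp0.le,
    ← lintegral_map hmeas hX, hXd]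
  have hmap1 : gaussianReal 0 v = Measure.map (fun x => Real.sqrt v * x) (gaussianReal 0 1) := by
    rw [show (fun x : ℝ => Real.sqrt v * x) = (Real.sqrt v * ·) from rfl,
      gaussianReal_map_const_mul, mul_zero, mul_one]
    congr 1
    ext
    simp [Real.sq_sqrt v.2]
  rw [hmap1, lintegral_map hmeas (measurable_const_mul _)]
  have hpt : ∀ x : ℝ, (‖Real.sqrt v * x‖₊ : ℝ≥0∞) ^ p
      = ENNReal.ofReal (Real.sqrt v) ^ p * (‖x‖₊ : ℝ≥0∞) ^ p := by
    intro x
    rw [nnnorm_mul, ENNReal.coe_mul, ENNReal.mul_rpow_of_nonneg _ _ hp0.le,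
      ← enorm_eq_nnnorm, Real.enorm_eq_ofReal (Real.sqrt_nonneg _)]
  rw [lintegral_congr hpt, lintegral_const_mul _ hmeas,
    ENNReal.mul_rpow_of_nonneg _ _ (by positivity : (0:ℝ) ≤ 1/p),
    ← ENNReal.rpow_mul, mul_one_div_cancel hp0.ne', ENNReal.rpow_one, gaussMoment]

lemma incr_comb {Ω : Type} [MeasurableSpace Ω] (P : Measure Ω) [IsProbabilityMeasure P]
    {T : ℝ} {W : ℝ → Ω → ℝ} (hW : IsStandardBM P T W)
    (a b t0 t1 t2 : ℝ) (h0 : 0 ≤ t0) (h01 : t0 ≤ t1) (h12 : t1 ≤ t2) (h2T : t2 ≤ T) :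
    Measure.map (fun ω => a * (W t1 ω - W t0 ω) + b * (W t2 ω - W t1 ω)) P
      = gaussianReal 0 (Real.toNNReal (a^2*(t1-t0) + b^2*(t2-t1))) := by
  have hXm : Measurable fun ω => a * (W t1 ω - W t0 ω) :=
    ((hW.meas t1).sub (hW.meas t0)).const_mul a
  have hYm : Measurable fun ω => b * (W t2 ω - W t1 ω) :=
    ((hW.meas t2).sub (hW.meas t1)).const_mul b
  have hXd : Measure.map (fun ω => a * (W t1 ω - W t0 ω)) P
      = gaussianReal 0 (⟨a^2, sq_nonneg a⟩ * (t1 - t0).toNNReal) := by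
    have h1 : (fun ω => a * (W t1 ω - W t0 ω)) = (a * ·) ∘ (fun ω => W t1 ω - W t0 ω) := rfl
    rw [h1, ← Measure.map_map (f := fun ω => W t1 ω - W t0 ω) (measurable_const_mul a) ((hW.meas t1).sub (hW.meas t0)),
      hW.gauss t0 t1 h0 h01 (h12.trans h2T), gaussianReal_map_const_mul, mul_zero]
    rfl
  have hYd : Measure.map (fun ω => b * (W t2 ω - W t1 ω)) P
      = gaussianReal 0 (⟨b^2, sq_nonneg b⟩ * (t2 - t1).toNNReal) := by
    have h1 : (fun ω => b * (W t2 ω - W t1 ω)) = (b * ·) ∘ (fun ω => W t2 ω - W t1 ω) := rfl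
    rw [h1, ← Measure.map_map (f := fun ω => W t2 ω - W t1 ω) (measurable_const_mul b) ((hW.meas t2).sub (hW.meas t1)),
      hW.gauss t1 t2 (h0.trans h01) h12 h2T, gaussianReal_map_const_mul, mul_zero]
    rfl
  have hind : IndepFun (fun ω => a * (W t1 ω - W t0 ω)) (fun ω => b * (W t2 ω - W t1 ω)) P := by
    set s : ℕ → ℝ := fun i => if i = 0 then t0 else if i = 1 then t1 else t2 with hs
    have hmem : ∀ i, i ≤ 2 → s i ∈ Set.Icc (0:ℝ) T := by
      intro i hi
      interval_cases i <;> simp [hs] <;>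
        constructor <;> linarith
    have hmono : ∀ i, i < 2 → s i ≤ s (i + 1) := by
      intro i hi
      interval_cases i <;> simpa [hs] using by assumption
    have h := hW.indep 2 s hmem hmono
    have h2 := h.indepFun (i := (0 : Fin 2)) (j := (1 : Fin 2)) (by decide)
    have hs0 : s 0 = t0 := rfl
    have hs1 : s 1 = t1 := rfl
    have hs2 : s 2 = t2 := rfl
    simp only [Fin.val_zero, Fin.val_one, hs0, hs1, hs2] at h2
    exact h2.comp (measurable_const_mul a) (measurable_const_mul b)
  have h := indep_gauss_sum P hXm hYm hind hXd hYd
  rw [h]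
  congr 1
  apply NNReal.coe_injective
  have e1 : (0:ℝ) ≤ t1 - t0 := by linarith
  have e2 : (0:ℝ) ≤ t2 - t1 := by linarith
  have e3 : (0:ℝ) ≤ a^2*(t1-t0) + b^2*(t2-t1) := by positivity
  show (a^2 : ℝ) * ((t1 - t0).toNNReal : ℝ) + (b^2 : ℝ) * ((t2 - t1).toNNReal : ℝ)
    = ((a^2*(t1-t0) + b^2*(t2-t1)).toNNReal : ℝ)
  rw [Real.coe_toNNReal _ e1, Real.coe_toNNReal _ e2, Real.coe_toNNReal _ e3]

/-- **Proposition 2.14, eq. (2.44)**: exact uniform-in-time `L^p`-error of the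
piecewise affine linear interpolation of Brownian motion on a uniform grid. -/
theorem brownian_sup_Lp_error
    {Ω : Type} [MeasurableSpace Ω] (P : Measure Ω) [IsProbabilityMeasure P]
    (T : ℝ) (hT : 0 < T) (W : ℝ → Ω → ℝ) (hW : IsStandardBM P T W)
    (p : ℝ) (hp : 1 ≤ p) (N : ℕ) (hN : 1 ≤ N) :
    (⨆ (t : ℝ) (_ : t ∈ Set.Icc (0:ℝ) T),
        eLpNorm (fun ω => W t ω - uniformInterp T N (fun s => W s ω) t)
          (ENNReal.ofReal p) P)
      = eLpNorm (W T) (ENNReal.ofReal p) P / ENNReal.ofReal (2 * Real.sqrt N) := by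
  have hN0 : (0:ℝ) < N := by exact_mod_cast hN
  set v : ℝ → ℝ := fun t =>
    (t * N / T - (⌊t * N / T⌋ : ℝ)) * ((⌊t * N / T⌋ : ℝ) + 1 - t * N / T) * (T / N) with hv
  -- Claim A
  have claimA : ∀ t ∈ Set.Icc (0:ℝ) T,
      eLpNorm (fun ω => W t ω - uniformInterp T N (fun s => W s ω) t) (ENNReal.ofReal p) P
        = ENNReal.ofReal (Real.sqrt (v t)) * gaussMoment p := by
    rintro t ⟨ht0, htT⟩
    rcases eq_or_lt_of_le htT with hteq | htlt
    · -- t = T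
      have huT : t * N / T = (N : ℝ) := by rw [hteq]; field_simp
      have hflT : (⌊t * N / T⌋ : ℝ) = (N : ℝ) := by
        rw [huT]; norm_num
      have hvT : v t = 0 := by
        show (t * N / T - (⌊t * N / T⌋ : ℝ)) * ((⌊t * N / T⌋ : ℝ) + 1 - t * N / T) * (T / N) = 0
        rw [hflT, huT]; ring
      have hfun : (fun ω => W t ω - uniformInterp T N (fun s => W s ω) t)
          = fun _ => (0:ℝ) := by
        funext ω
        simp only [uniformInterp, smul_eq_mul]
        rw [huT, show ((⌊(N:ℝ)⌋ : ℝ)) = (N:ℝ) by norm_num,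
          show (N:ℝ) * T / N = t by rw [hteq]; field_simp]
        ring
      rw [hfun, hvT]
      simp [eLpNorm_zero']
    · -- t < T
      have hu0 : 0 ≤ t * N / T := by positivity
      have hfl0 : (0:ℝ) ≤ (⌊t * N / T⌋ : ℝ) := by
        exact_mod_cast Int.floor_nonneg.mpr hu0
      have huN : t * N / T < N := by
        rw [div_lt_iff₀ hT]
        nlinarith
      have hflN : (⌊t * N / T⌋ : ℝ) + 1 ≤ (N : ℝ) := by
        have h1 : ⌊t * N / T⌋ < (N : ℤ) := by
          apply Int.floor_lt.mpr
          exact_mod_cast huN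
        exact_mod_cast h1
      have hle : (⌊t * N / T⌋ : ℝ) ≤ t * N / T := Int.floor_le _
      have hlt : t * N / T < (⌊t * N / T⌋ : ℝ) + 1 := Int.lt_floor_add_one _
      set n : ℝ := (⌊t * N / T⌋ : ℝ) with hn
      have h0 : 0 ≤ n * T / N := by positivity
      have h01 : n * T / N ≤ t := by
        rw [div_le_iff₀ hN0]
        calc n * T ≤ (t * N / T) * T := by nlinarith
          _ = t * N := by field_simp
      have h12 : t ≤ (n + 1) * T / N := by
        rw [le_div_iff₀ hN0]
        calc t * N = (t * N / T) * T := by field_simp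
          _ ≤ (n + 1) * T := by nlinarith
      have h2T : (n + 1) * T / N ≤ T := by
        rw [div_le_iff₀ hN0]
        nlinarith
      have hfun : (fun ω => W t ω - uniformInterp T N (fun s => W s ω) t)
          = fun ω => (n + 1 - t * N / T) * (W t ω - W (n * T / N) ω)
              + (-(t * N / T - n)) * (W ((n + 1) * T / N) ω - W t ω) := by
        funext ω
        simp only [uniformInterp, smul_eq_mul, ← hn]
        ring
      have hdist := incr_comb P hW (n + 1 - t * N / T) (-(t * N / T - n))
        (n * T / N) t ((n + 1) * T / N) h0 h01 h12 h2T
      rw [← hfun] at hdist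
      have hmeas : Measurable (fun ω => W t ω - uniformInterp T N (fun s => W s ω) t) := by
        rw [hfun]
        exact (((hW.meas t).sub (hW.meas _)).const_mul _).add
          (((hW.meas _).sub (hW.meas t)).const_mul _)
      rw [eLpNorm_of_gauss P hmeas hdist hp]
      congr 2
      have hveq : (n + 1 - t * N / T)^2 * (t - n * T / N)
          + (-(t * N / T - n))^2 * ((n + 1) * T / N - t) = v t := by
        rw [hv]
        simp only [← hn]
        field_simp
        ring
      rw [hveq]
      have hvnn : 0 ≤ v t := by
        show 0 ≤ (t * N / T - (⌊t * N / T⌋ : ℝ)) * ((⌊t * N / T⌋ : ℝ) + 1 - t * N / T) * (T / N)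
        rw [← hn]
        exact mul_nonneg (mul_nonneg (by linarith) (by linarith)) (by positivity)
      rw [Real.coe_toNNReal _ hvnn]
  -- rewrite the biSup
  have hsup1 : (⨆ (t : ℝ) (_ : t ∈ Set.Icc (0:ℝ) T),
      eLpNorm (fun ω => W t ω - uniformInterp T N (fun s => W s ω) t) (ENNReal.ofReal p) P)
      = ⨆ (t : ℝ) (_ : t ∈ Set.Icc (0:ℝ) T),
          ENNReal.ofReal (Real.sqrt (v t)) * gaussMoment p := by
    apply iSup_congr
    intro t
    by_cases h : t ∈ Set.Icc (0:ℝ) T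
    · rw [ciSup_pos h, ciSup_pos h]
      exact claimA t h
    · rw [iSup_neg h, iSup_neg h]
  rw [hsup1]
  simp_rw [← ENNReal.iSup_mul]
  -- compute the sup of the variances
  have hsup2 : (⨆ (t : ℝ) (_ : t ∈ Set.Icc (0:ℝ) T), ENNReal.ofReal (Real.sqrt (v t)))
      = ENNReal.ofReal (Real.sqrt (T / (4 * N))) := by
    apply le_antisymm
    · apply iSup₂_le
      intro t _
      apply ENNReal.ofReal_le_ofReal
      apply Real.sqrt_le_sqrt
      rw [hv]
      simp only
      have hd : (0:ℝ) ≤ T / N := by positivity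
      have hkey : (0:ℝ) ≤ (1/4 - (t * N / T - (⌊t * N / T⌋:ℝ)) * ((⌊t * N / T⌋:ℝ) + 1 - t * N / T)) * (T / N) := by
        apply mul_nonneg _ hd
        nlinarith [sq_nonneg (t * N / T - (⌊t * N / T⌋:ℝ) - 1/2)]
      have h4 : T / (4 * N) = (1/4) * (T / N) := by ring
      nlinarith
    · have htm : T / (2 * N) ∈ Set.Icc (0:ℝ) T := by
        constructor
        · positivity
        · apply div_le_self hT.le
          have : (1:ℝ) ≤ N := by exact_mod_cast hN
          linarith
      have hvt : v (T / (2 * N)) = T / (4 * N) := by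
        have hu : T / (2 * N) * N / T = 1/2 := by field_simp
        rw [hv]
        simp only
        rw [hu]
        rw [show ⌊(1/2 : ℝ)⌋ = 0 by norm_num [Int.floor_eq_zero_iff]]
        push_cast
        ring
      calc ENNReal.ofReal (Real.sqrt (T / (4 * N)))
          = ENNReal.ofReal (Real.sqrt (v (T / (2 * N)))) := by rw [hvt]
        _ ≤ _ := le_iSup₂ (f := fun (t : ℝ) (_ : t ∈ Set.Icc (0:ℝ) T) =>
            ENNReal.ofReal (Real.sqrt (v t))) (T / (2 * N)) htm
  rw [hsup2]
  -- RHS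
  have hWT : Measure.map (W T) P = gaussianReal 0 (Real.toNNReal T) := by
    have h1 : (fun ω => W T ω - W 0 ω) = W T := by
      funext ω; rw [hW.start ω, sub_zero]
    have h2 := hW.gauss 0 T le_rfl hT.le le_rfl
    rw [h1, sub_zero] at h2
    exact h2
  rw [eLpNorm_of_gauss P (hW.meas T) hWT hp, Real.coe_toNNReal _ hT.le]
  -- final algebra
  have hsN : (0:ℝ) < Real.sqrt N := Real.sqrt_pos.mpr hN0
  have h4 : Real.sqrt (T / (4 * N)) = Real.sqrt T / (2 * Real.sqrt N) := by
    rw [Real.sqrt_div hT.le, Real.sqrt_mul (by norm_num : (0:ℝ) ≤ 4),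
      show Real.sqrt (4:ℝ) = 2 by
        rw [show (4:ℝ) = 2^2 by norm_num, Real.sqrt_sq (by norm_num : (0:ℝ) ≤ 2)]]
  rw [h4, ENNReal.ofReal_div_of_pos (by positivity), div_eq_mul_inv, div_eq_mul_inv]
  ring

end AuxiliaryLemmas
end

section
/- Let (E,‖·‖_E) be a real Banach space, let (Ω,F,P) be a probability space, let k ∈ ℕ, let ξ_1, …, ξ_k : Ω → E be Bochner integrable strongly measurable random variables with E[ξ_j] = 0 for every j ∈ {1,…,k}, and let r_1, …, r_k : Ω → {−1,1} be a P-Rademacher family such that the 2k random variables ξ_1, …, ξ_k, r_1, …, r_k are mutually independent. Then for all p ∈ [1,∞) it holds that (E[‖Σ_{j=1}^k ξ_j‖_E^p])^{1/p} ≤ 2 · (E[‖Σ_{j=1}^k r_j·ξ_j‖_E^p])^{1/p} (both sides taking values in [0,∞]). -/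
open MeasureTheory ENNReal

/-- Index type for the joint family `ξ_1, …, ξ_k, r_1, …, r_k`: the left
summand indexes the `E`-valued variables `ξ_j` and the right summand the
real-valued Rademacher variables `r_j`. -/
def mixedType (E : Type) (k : ℕ) : Fin k ⊕ Fin k → Type := fun i =>
  match i with
  | Sum.inl _ => E
  | Sum.inr _ => ℝ

/-- The canonical measurable-space structure on `mixedType E k i`. -/
def mixedMeasurableSpace (E : Type) [MeasurableSpace E] (k : ℕ) :
    ∀ i : Fin k ⊕ Fin k, MeasurableSpace (mixedType E k i) := fun i =>
  match i with
  | Sum.inl _ => (inferInstance : MeasurableSpace E)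
  | Sum.inr _ => (inferInstance : MeasurableSpace ℝ)

/-- The joint family `ξ_1, …, ξ_k, r_1, …, r_k` as a single dependent family. -/
def mixedFamily {Ω E : Type} (k : ℕ) (ξ : Fin k → Ω → E) (r : Fin k → Ω → ℝ) :
    ∀ i : Fin k ⊕ Fin k, Ω → mixedType E k i := fun i =>
  match i with
  | Sum.inl j => ξ j
  | Sum.inr j => r j


section RandomisationAux

open ProbabilityTheory Set

set_option linter.unusedSectionVars false

variable {Ω E : Type} [MeasurableSpace Ω]
    [NormedAddCommGroup E] [NormedSpace ℝ E] [CompleteSpace E]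
    [MeasurableSpace E] [BorelSpace E]
    {P : Measure Ω} [IsProbabilityMeasure P]

private lemma aux_jensen {Y : Ω → E} (hYint : Integrable Y P)
    (hY0 : ∫ ω, Y ω ∂P = 0) {p : ℝ} (hp : 1 ≤ p) (x : E) :
    (‖x‖₊ : ℝ≥0∞) ^ p ≤ ∫⁻ ω, (‖x - Y ω‖₊ : ℝ≥0∞) ^ p ∂P := by
  have hp0 : 0 < p := lt_of_lt_of_le one_pos hp
  have hint : Integrable (fun ω => x - Y ω) P := (integrable_const x).sub hYint
  have hxint : x = ∫ ω, (x - Y ω) ∂P := by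
    rw [integral_sub (integrable_const x) hYint, hY0, sub_zero, integral_const, probReal_univ,
      one_smul]
  have h1 : (‖x‖₊ : ℝ≥0∞) ≤ ∫⁻ ω, (‖x - Y ω‖₊ : ℝ≥0∞) ∂P := by
    calc (‖x‖₊ : ℝ≥0∞) = ENNReal.ofReal ‖x‖ := (ofReal_norm_eq_enorm x).symm
    _ ≤ ENNReal.ofReal (∫ ω, ‖x - Y ω‖ ∂P) := by
        apply ENNReal.ofReal_le_ofReal
        calc ‖x‖ = ‖∫ ω, (x - Y ω) ∂P‖ := by rw [← hxint]
        _ ≤ ∫ ω, ‖x - Y ω‖ ∂P := norm_integral_le_integral_norm _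
    _ = ∫⁻ ω, (‖x - Y ω‖₊ : ℝ≥0∞) ∂P := ofReal_integral_norm_eq_lintegral_enorm hint
  have h2 : eLpNorm (fun ω => x - Y ω) 1 P ≤ eLpNorm (fun ω => x - Y ω) (ENNReal.ofReal p) P :=
    eLpNorm_le_eLpNorm_of_exponent_le (ENNReal.one_le_ofReal.2 hp) hint.1
  rw [eLpNorm_one_eq_lintegral_enorm, eLpNorm_eq_lintegral_rpow_enorm_toReal
    (by simp [ENNReal.ofReal_eq_zero]; linarith) ENNReal.ofReal_ne_top,
    ENNReal.toReal_ofReal hp0.le] at h2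
  have h3 : (‖x‖₊ : ℝ≥0∞) ≤ (∫⁻ ω, (‖x - Y ω‖₊ : ℝ≥0∞) ^ p ∂P) ^ (1 / p) := h1.trans h2
  calc (‖x‖₊ : ℝ≥0∞) ^ p ≤ ((∫⁻ ω, (‖x - Y ω‖₊ : ℝ≥0∞) ^ p ∂P) ^ (1 / p)) ^ p :=
        ENNReal.rpow_le_rpow h3 hp0.le
  _ = ∫⁻ ω, (‖x - Y ω‖₊ : ℝ≥0∞) ^ p ∂P := by
        rw [← ENNReal.rpow_mul, one_div_mul_cancel hp0.ne', ENNReal.rpow_one]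

private lemma aux_fubini {X Y : Ω → E} (hX : StronglyMeasurable X) (hY : StronglyMeasurable Y)
    (hind : IndepFun X Y P) (p : ℝ) :
    ∫⁻ ω, ∫⁻ ω', (‖X ω - Y ω'‖₊ : ℝ≥0∞) ^ p ∂P ∂P
      = ∫⁻ ω, (‖X ω - Y ω‖₊ : ℝ≥0∞) ^ p ∂P := by
  obtain ⟨c, hc_count, hc_sub⟩ :
      TopologicalSpace.IsSeparable (range X ∪ range Y) :=
    hX.isSeparable_range.union hY.isSeparable_range
  obtain ⟨u, hu⟩ : ∃ u : ℕ → E, insert (0:E) c = range u :=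
    Set.Countable.exists_eq_range (hc_count.insert 0) (insert_nonempty _ _)
  have hmem : ∀ y ∈ range X ∪ range Y, y ∈ closure (range u) := by
    intro y hy
    exact closure_mono (by rw [← hu]; exact subset_insert _ _) (hc_sub hy)
  set g0 : E × E → ℝ≥0∞ := fun z => ⨅ n, ENNReal.ofReal (‖z.1 - u n‖ + ‖u n - z.2‖) with hg0
  have hg0_meas : Measurable g0 := by
    apply Measurable.iInf
    intro n
    apply Measurable.ennreal_ofReal
    exact ((continuous_norm.comp (continuous_id.sub continuous_const)).measurable.comp
      measurable_fst).add
      ((continuous_norm.comp (continuous_const.sub continuous_id)).measurable.comp measurable_snd)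
  have hg0_eq : ∀ x : E, ∀ y ∈ closure (range u), g0 (x, y) = ENNReal.ofReal ‖x - y‖ := by
    intro x y hy
    refine le_antisymm ?_ ?_
    · refine ENNReal.le_of_forall_pos_le_add fun ε hε _ => ?_
      have hε2 : (0:ℝ) < ε / 2 := by positivity
      obtain ⟨z, ⟨n, rfl⟩, hz⟩ := Metric.mem_closure_iff.1 hy ((ε:ℝ)/2) hε2
      have h1 : ‖y - u n‖ < (ε:ℝ)/2 := by rw [← dist_eq_norm]; exact hz
      have h2 : ‖u n - y‖ < (ε:ℝ)/2 := by rw [← dist_eq_norm, dist_comm]; exact hz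
      calc g0 (x, y) ≤ ENNReal.ofReal (‖x - u n‖ + ‖u n - y‖) := iInf_le _ n
      _ ≤ ENNReal.ofReal (‖x - y‖ + ε) := by
          apply ENNReal.ofReal_le_ofReal
          have := norm_sub_le_norm_sub_add_norm_sub x y (u n)
          linarith
      _ = ENNReal.ofReal ‖x - y‖ + ENNReal.ofReal ε := by
          rw [ENNReal.ofReal_add (norm_nonneg _) (by positivity)]
      _ ≤ ENNReal.ofReal ‖x - y‖ + ε := by
          gcongr
          exact ENNReal.ofReal_coe_nnreal.le
    · exact le_iInf fun n => ENNReal.ofReal_le_ofReal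
        (norm_sub_le_norm_sub_add_norm_sub x (u n) y)
  set g : E × E → ℝ≥0∞ := fun z => g0 z ^ p with hg
  have hg_meas : Measurable g := hg0_meas.pow_const _
  have hXm := hX.measurable
  have hYm := hY.measurable
  have hgXY : ∀ ω ω', g (X ω, Y ω') = (‖X ω - Y ω'‖₊ : ℝ≥0∞) ^ p := by
    intro ω ω'
    rw [hg]
    simp only []
    rw [hg0_eq _ _ (hmem _ (Or.inr ⟨ω', rfl⟩)), ofReal_norm_eq_enorm, enorm_eq_nnnorm]
  haveI : IsProbabilityMeasure (P.map X) := Measure.isProbabilityMeasure_map hXm.aemeasurable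
  haveI : IsProbabilityMeasure (P.map Y) := Measure.isProbabilityMeasure_map hYm.aemeasurable
  have map_eq : P.map (fun ω => (X ω, Y ω)) = (P.map X).prod (P.map Y) :=
    (indepFun_iff_map_prod_eq_prod_map_map hXm.aemeasurable hYm.aemeasurable).1 hind
  calc ∫⁻ ω, ∫⁻ ω', (‖X ω - Y ω'‖₊ : ℝ≥0∞) ^ p ∂P ∂P
      = ∫⁻ ω, ∫⁻ ω', g (X ω, Y ω') ∂P ∂P :=
        lintegral_congr fun ω => lintegral_congr fun ω' => (hgXY ω ω').symm
    _ = ∫⁻ ω, ∫⁻ y, g (X ω, y) ∂(P.map Y) ∂P :=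
        lintegral_congr fun ω =>
          (lintegral_map (hg_meas.comp measurable_prodMk_left) hYm).symm
    _ = ∫⁻ x, ∫⁻ y, g (x, y) ∂(P.map Y) ∂(P.map X) :=
        (lintegral_map (hg_meas.lintegral_prod_right') hXm).symm
    _ = ∫⁻ z, g z ∂((P.map X).prod (P.map Y)) :=
        (lintegral_prod g hg_meas.aemeasurable).symm
    _ = ∫⁻ z, g z ∂(P.map (fun ω => (X ω, Y ω))) := by rw [map_eq]
    _ = ∫⁻ ω, g (X ω, Y ω) ∂P := lintegral_map hg_meas (hXm.prodMk hYm)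
    _ = ∫⁻ ω, (‖X ω - Y ω‖₊ : ℝ≥0∞) ^ p ∂P := lintegral_congr fun ω => hgXY ω ω

private lemma aux_key {X Y : Ω → E} (hX : StronglyMeasurable X) (hY : StronglyMeasurable Y)
    (hYint : Integrable Y P) (hY0 : ∫ ω, Y ω ∂P = 0) (hind : IndepFun X Y P)
    {p : ℝ} (hp : 1 ≤ p) :
    ∫⁻ ω, (‖X ω‖₊ : ℝ≥0∞) ^ p ∂P ≤ ∫⁻ ω, (‖X ω - Y ω‖₊ : ℝ≥0∞) ^ p ∂P :=
  calc ∫⁻ ω, (‖X ω‖₊ : ℝ≥0∞) ^ p ∂P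
      ≤ ∫⁻ ω, ∫⁻ ω', (‖X ω - Y ω'‖₊ : ℝ≥0∞) ^ p ∂P ∂P :=
        lintegral_mono fun ω => aux_jensen hYint hY0 hp (X ω)
    _ = _ := aux_fubini hX hY hind p


private lemma aux_key_eLpNorm {X Y : Ω → E} (hX : StronglyMeasurable X) (hY : StronglyMeasurable Y)
    (hYint : Integrable Y P) (hY0 : ∫ ω, Y ω ∂P = 0) (hind : IndepFun X Y P)
    {p : ℝ} (hp : 1 ≤ p) :
    eLpNorm X (ENNReal.ofReal p) P ≤ eLpNorm (X - Y) (ENNReal.ofReal p) P := by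
  have hp0 : 0 < p := lt_of_lt_of_le one_pos hp
  rw [eLpNorm_eq_lintegral_rpow_enorm_toReal (by simp [ENNReal.ofReal_eq_zero]; linarith)
    ENNReal.ofReal_ne_top, eLpNorm_eq_lintegral_rpow_enorm_toReal (by simp [ENNReal.ofReal_eq_zero]; linarith)
    ENNReal.ofReal_ne_top, ENNReal.toReal_ofReal hp0.le]
  exact ENNReal.rpow_le_rpow (aux_key hX hY hYint hY0 hind hp) (by positivity)


private lemma aux_signs {k : ℕ} {ξ : Fin k → Ω → E} (hξm : ∀ j, StronglyMeasurable (ξ j))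
    (hξint : ∀ j, Integrable (ξ j) P) (hξmean : ∀ j, ∫ ω, ξ j ω ∂P = 0)
    (s : Finset (Fin k))
    (hsplit : IndepFun (fun ω => ∑ j ∈ s, ξ j ω) (fun ω => ∑ j ∈ sᶜ, ξ j ω) P)
    {p : ℝ} (hp : 1 ≤ p) :
    eLpNorm (fun ω => ∑ j, ξ j ω) (ENNReal.ofReal p) P
      ≤ 2 * eLpNorm (fun ω => ∑ j ∈ s, ξ j ω - ∑ j ∈ sᶜ, ξ j ω) (ENNReal.ofReal p) P := by
  set X : Ω → E := fun ω => ∑ j ∈ s, ξ j ω with hX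
  set Y : Ω → E := fun ω => ∑ j ∈ sᶜ, ξ j ω with hY
  have hXm : StronglyMeasurable X := Finset.stronglyMeasurable_fun_sum _ fun j _ => hξm j
  have hYm : StronglyMeasurable Y := Finset.stronglyMeasurable_fun_sum _ fun j _ => hξm j
  have hXint : Integrable X P := integrable_finset_sum _ fun j _ => hξint j
  have hYint : Integrable Y P := integrable_finset_sum _ fun j _ => hξint j
  have hX0 : ∫ ω, X ω ∂P = 0 := by
    rw [hX]; rw [integral_finset_sum _ fun j _ => hξint j]
    simp [hξmean]
  have hY0 : ∫ ω, Y ω ∂P = 0 := by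
    rw [hY]; rw [integral_finset_sum _ fun j _ => hξint j]
    simp [hξmean]
  have hsum : (fun ω => ∑ j, ξ j ω) = X + Y := by
    funext ω
    simp only [hX, hY, Pi.add_apply]
    exact (Finset.sum_add_sum_compl s _).symm
  have h1 : eLpNorm X (ENNReal.ofReal p) P ≤ eLpNorm (X - Y) (ENNReal.ofReal p) P :=
    aux_key_eLpNorm hXm hYm hYint hY0 hsplit hp
  have h2 : eLpNorm Y (ENNReal.ofReal p) P ≤ eLpNorm (X - Y) (ENNReal.ofReal p) P := by
    have := aux_key_eLpNorm hYm hXm hXint hX0 hsplit.symm hp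
    rwa [show Y - X = -(X - Y) by rw [neg_sub], eLpNorm_neg] at this
  calc eLpNorm (fun ω => ∑ j, ξ j ω) (ENNReal.ofReal p) P
      = eLpNorm (X + Y) (ENNReal.ofReal p) P := by rw [hsum]
    _ ≤ eLpNorm X (ENNReal.ofReal p) P + eLpNorm Y (ENNReal.ofReal p) P :=
        eLpNorm_add_le hXm.aestronglyMeasurable hYm.aestronglyMeasurable
          (ENNReal.one_le_ofReal.2 hp)
    _ ≤ eLpNorm (X - Y) (ENNReal.ofReal p) P + eLpNorm (X - Y) (ENNReal.ofReal p) P :=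
        add_le_add h1 h2
    _ = 2 * eLpNorm (X - Y) (ENNReal.ofReal p) P := (two_mul _).symm
    _ = _ := by rw [hX, hY]; rfl

end RandomisationAux

open ProbabilityTheory Set in
/-- **Lemma 4.12** (randomisation): if `ξ_1, …, ξ_k` are centered integrable
random variables and `r_1, …, r_k` is a Rademacher family such that the `2k`
random variables `ξ_1, …, ξ_k, r_1, …, r_k` are mutually independent, then the
`L^p`-norm of `∑ ξ_j` is at most twice the `L^p`-norm of `∑ r_j • ξ_j`. -/
theorem randomisation_lemma
    {Ω E : Type} [MeasurableSpace Ω]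
    [NormedAddCommGroup E] [NormedSpace ℝ E] [CompleteSpace E]
    [MeasurableSpace E] [BorelSpace E]
    (P : Measure Ω) [IsProbabilityMeasure P]
    (k : ℕ) (hk : 1 ≤ k)
    (ξ : Fin k → Ω → E) (r : Fin k → Ω → ℝ)
    (hξm : ∀ j, StronglyMeasurable (ξ j))
    (hξint : ∀ j, Integrable (ξ j) P)
    (hξmean : ∀ j, ∫ ω, ξ j ω ∂P = 0)
    (hrm : ∀ j, Measurable (r j))
    (hrval : ∀ j ω, r j ω = 1 ∨ r j ω = -1)
    (hrsym : ∀ j, P {ω | r j ω = 1} = P {ω | r j ω = -1})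
    (hindep : @ProbabilityTheory.iIndepFun _ _ _ _
      (mixedMeasurableSpace E k) (mixedFamily k ξ r) P)
    (p : ℝ) (hp : 1 ≤ p) :
    eLpNorm (fun ω => ∑ j, ξ j ω) (ENNReal.ofReal p) P
      ≤ 2 * eLpNorm (fun ω => ∑ j, r j ω • ξ j ω) (ENNReal.ofReal p) P := by
  have hp0 : 0 < p := lt_of_lt_of_le one_pos hp
  set q : ℝ≥0∞ := ENNReal.ofReal p with hq
  have hq0 : q ≠ 0 := by simp [hq, ENNReal.ofReal_eq_zero]; linarith
  have hq_top : q ≠ ∞ := ENNReal.ofReal_ne_top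
  -- the family of comap σ-algebras
  set mm : Fin k ⊕ Fin k → MeasurableSpace Ω := fun i =>
    (mixedMeasurableSpace E k i).comap (mixedFamily k ξ r i) with hmm
  have hiI : iIndep mm P := (iIndepFun_iff_iIndep _ _ _).1 hindep
  have h_le : ∀ i, mm i ≤ ‹MeasurableSpace Ω› := by
    rintro (j | j)
    · exact (hξm j).measurable.comap_le
    · exact (hrm j).comap_le
  -- ξ j strongly measurable w.r.t. mm (inl j)
  have hξsm : ∀ j, StronglyMeasurable[mm (Sum.inl j)] (ξ j) := by
    intro j
    refine stronglyMeasurable_iff_measurable_separable.2 ⟨?_, (hξm j).isSeparable_range⟩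
    exact Measurable.of_comap_le le_rfl
  -- σ-algebras generated by subfamilies of the ξ and by the r
  have hξsm_sup : ∀ (S : Set (Fin k)) (j : Fin k), j ∈ S →
      StronglyMeasurable[⨆ i ∈ Sum.inl '' S, mm i] (ξ j) := by
    intro S j hj
    exact (hξsm j).mono (le_iSup₂ (f := fun i (_ : i ∈ Sum.inl '' S) => mm i)
      (Sum.inl j) ⟨j, hj, rfl⟩)
  have hsum_sm : ∀ (S : Set (Fin k)) (s : Finset (Fin k)), ↑s ⊆ S →
      StronglyMeasurable[⨆ i ∈ Sum.inl '' S, mm i] (fun ω => ∑ j ∈ s, ξ j ω) := by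
    intro S s hs
    exact Finset.stronglyMeasurable_fun_sum _ fun j hj => hξsm_sup S j (hs hj)
  -- split independence for each s
  have hsplit : ∀ s : Finset (Fin k),
      IndepFun (fun ω => ∑ j ∈ s, ξ j ω) (fun ω => ∑ j ∈ sᶜ, ξ j ω) P := by
    intro s
    have hdisj : Disjoint ((Sum.inl : Fin k → Fin k ⊕ Fin k) '' ↑s)
        ((Sum.inl : Fin k → Fin k ⊕ Fin k) '' ↑(sᶜ)) := by
      rw [Set.disjoint_image_iff Sum.inl_injective, Finset.coe_compl]
      exact disjoint_compl_right
    have hIndep := indep_iSup_of_disjoint h_le hiI hdisj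
    have h1 := ((hsum_sm ↑s s subset_rfl).measurable).comap_le
    have h2 := ((hsum_sm ↑(sᶜ) (sᶜ) subset_rfl).measurable).comap_le
    exact indep_of_indep_of_le_right (indep_of_indep_of_le_left hIndep h1) h2
  -- independence of the r-σ-algebra and the ξ-σ-algebra
  have hsup_le : ∀ S : Set (Fin k ⊕ Fin k), (⨆ i ∈ S, mm i) ≤ ‹MeasurableSpace Ω› :=
    fun S => iSup₂_le fun i _ => h_le i
  have hIndep_rξ : Indep (⨆ i ∈ Set.range (Sum.inr : Fin k → Fin k ⊕ Fin k), mm i)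
      (⨆ i ∈ Set.range (Sum.inl : Fin k → Fin k ⊕ Fin k), mm i) P := by
    refine indep_iSup_of_disjoint h_le hiI ?_
    exact (Set.isCompl_range_inl_range_inr.disjoint).symm
  -- sign-pattern events
  classical
  set A : Finset (Fin k) → Set Ω := fun s =>
    ⋂ j, r j ⁻¹' {if j ∈ s then (1:ℝ) else -1} with hA
  have hA_meas : ∀ s, MeasurableSet (A s) := fun s =>
    MeasurableSet.iInter fun j => (hrm j) (measurableSet_singleton _)
  have hA_mr : ∀ s, MeasurableSet[⨆ i ∈ Set.range (Sum.inr : Fin k → Fin k ⊕ Fin k), mm i]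
      (A s) := by
    intro s
    refine MeasurableSet.iInter fun j => ?_
    have h1 : mm (Sum.inr j) ≤ ⨆ i ∈ Set.range (Sum.inr : Fin k → Fin k ⊕ Fin k), mm i :=
      le_iSup₂ (f := fun i (_ : i ∈ Set.range (Sum.inr : Fin k → Fin k ⊕ Fin k)) => mm i)
        (Sum.inr j) ⟨j, rfl⟩
    exact h1 _ ⟨{if j ∈ s then (1:ℝ) else -1}, @measurableSet_singleton ℝ _ _ _, rfl⟩
  have hA_mem : ∀ ω, ω ∈ A (Finset.univ.filter fun j => r j ω = 1) := by
    intro ω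
    refine Set.mem_iInter.2 fun j => ?_
    simp only [hA, Set.mem_preimage, Set.mem_singleton_iff, Finset.mem_filter, Finset.mem_univ,
      true_and]
    by_cases h : r j ω = 1
    · simp [h]
    · simp only [h, if_false]
      exact (hrval j ω).resolve_left h
  have hA_union : (⋃ s, A s) = Set.univ :=
    Set.eq_univ_of_forall fun ω => Set.mem_iUnion.2 ⟨_, hA_mem ω⟩
  have hA_disj : Pairwise (Function.onFun Disjoint A) := by
    intro s t hst
    rw [Function.onFun, Set.disjoint_left]
    intro ω hωs hωt
    apply hst
    ext j
    have h1 := Set.mem_iInter.1 hωs j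
    have h2 := Set.mem_iInter.1 hωt j
    simp only [Set.mem_preimage, Set.mem_singleton_iff] at h1 h2
    by_cases hs' : j ∈ s <;> by_cases ht' : j ∈ t <;>
      simp only [hs', ht', if_true, if_false, iff_true, iff_false] at h1 h2 ⊢
    · rw [h1] at h2; norm_num at h2
    · rw [h1] at h2; norm_num at h2
  -- the deterministic-sign sums
  set Z : Finset (Fin k) → Ω → E := fun s ω => ∑ j ∈ s, ξ j ω - ∑ j ∈ sᶜ, ξ j ω with hZ
  have hZ_eq : ∀ s, ∀ ω ∈ A s, (∑ j, r j ω • ξ j ω) = Z s ω := by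
    intro s ω hω
    have hval : ∀ j, r j ω = if j ∈ s then (1:ℝ) else -1 := fun j => Set.mem_iInter.1 hω j
    calc (∑ j, r j ω • ξ j ω)
        = ∑ j ∈ s, r j ω • ξ j ω + ∑ j ∈ sᶜ, r j ω • ξ j ω :=
          (Finset.sum_add_sum_compl s _).symm
      _ = ∑ j ∈ s, ξ j ω + ∑ j ∈ sᶜ, -(ξ j ω) := by
          congr 1
          · exact Finset.sum_congr rfl fun j hj => by rw [hval j, if_pos hj, one_smul]
          · exact Finset.sum_congr rfl fun j hj => by
              rw [hval j, if_neg (Finset.mem_compl.1 hj), neg_one_smul]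
      _ = Z s ω := by rw [Finset.sum_neg_distrib, ← sub_eq_add_neg]
  have hsum_sm' : ∀ s : Finset (Fin k),
      StronglyMeasurable[⨆ i ∈ Set.range (Sum.inl : Fin k → Fin k ⊕ Fin k), mm i]
        (fun ω => ∑ j ∈ s, ξ j ω) := by
    intro s
    have := hsum_sm Set.univ s (Set.subset_univ _)
    rwa [Set.image_univ] at this
  have hg_meas : ∀ s : Finset (Fin k),
      Measurable[⨆ i ∈ Set.range (Sum.inl : Fin k → Fin k ⊕ Fin k), mm i]
        (fun ω => (‖Z s ω‖₊ : ℝ≥0∞) ^ p) := by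
    intro s
    have houter : Measurable fun x : E => (‖x‖₊ : ℝ≥0∞) ^ p :=
      (measurable_nnnorm.coe_nnreal_ennreal).pow_const p
    exact houter.comp ((hsum_sm' s).sub (hsum_sm' sᶜ)).measurable
  -- decomposition of the RHS integral
  set F : Ω → ℝ≥0∞ := fun ω => (‖∑ j, r j ω • ξ j ω‖₊ : ℝ≥0∞) ^ p with hF
  have hstep : ∀ s : Finset (Fin k), ∫⁻ ω in A s, F ω ∂P
      = P (A s) * ∫⁻ ω, (‖Z s ω‖₊ : ℝ≥0∞) ^ p ∂P := by
    intro s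
    have h1 : ∫⁻ ω in A s, F ω ∂P = ∫⁻ ω in A s, (‖Z s ω‖₊ : ℝ≥0∞) ^ p ∂P := by
      refine setLIntegral_congr_fun (hA_meas s) (fun ω hω => ?_)
      rw [hF]
      simp only []
      rw [hZ_eq s ω hω]
    have hmul : ∀ ω, (A s).indicator (1 : Ω → ℝ≥0∞) ω * (‖Z s ω‖₊ : ℝ≥0∞) ^ p
        = (A s).indicator (fun ω => (‖Z s ω‖₊ : ℝ≥0∞) ^ p) ω := by
      intro ω
      by_cases h : ω ∈ A s <;> simp [h]
    have hind_meas : Measurable[⨆ i ∈ Set.range (Sum.inr : Fin k → Fin k ⊕ Fin k), mm i]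
        ((A s).indicator (1 : Ω → ℝ≥0∞)) := by
      letI m' : MeasurableSpace Ω := ⨆ i ∈ Set.range (Sum.inr : Fin k → Fin k ⊕ Fin k), mm i
      exact measurable_one.indicator (hA_mr s)
    have hprod := lintegral_mul_eq_lintegral_mul_lintegral_of_independent_measurableSpace
      (hsup_le _) (hsup_le _) hIndep_rξ hind_meas (hg_meas s)
    calc ∫⁻ ω in A s, F ω ∂P = ∫⁻ ω in A s, (‖Z s ω‖₊ : ℝ≥0∞) ^ p ∂P := h1
      _ = ∫⁻ ω, (A s).indicator (fun ω => (‖Z s ω‖₊ : ℝ≥0∞) ^ p) ω ∂P :=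
          (lintegral_indicator (hA_meas s) _).symm
      _ = ∫⁻ ω, (A s).indicator (1 : Ω → ℝ≥0∞) ω * (‖Z s ω‖₊ : ℝ≥0∞) ^ p ∂P :=
          lintegral_congr fun ω => (hmul ω).symm
      _ = (∫⁻ ω, (A s).indicator (1 : Ω → ℝ≥0∞) ω ∂P) * ∫⁻ ω, (‖Z s ω‖₊ : ℝ≥0∞) ^ p ∂P := hprod
      _ = P (A s) * ∫⁻ ω, (‖Z s ω‖₊ : ℝ≥0∞) ^ p ∂P := by
          rw [lintegral_indicator_one (hA_meas s)]
  have hdecomp : ∫⁻ ω, F ω ∂P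
      = ∑ s : Finset (Fin k), P (A s) * ∫⁻ ω, (‖Z s ω‖₊ : ℝ≥0∞) ^ p ∂P := by
    calc ∫⁻ ω, F ω ∂P = ∫⁻ ω in ⋃ s, A s, F ω ∂P := by
          rw [hA_union, Measure.restrict_univ]
      _ = ∑' s, ∫⁻ ω in A s, F ω ∂P := lintegral_iUnion hA_meas hA_disj F
      _ = ∑ s, ∫⁻ ω in A s, F ω ∂P := tsum_fintype _
      _ = _ := Finset.sum_congr rfl fun s _ => hstep s
  -- the key inequality for each sign pattern
  set twoP : ℝ≥0∞ := (2:ℝ≥0∞) ^ p with htwoP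
  have htwoP0 : twoP ≠ 0 := (ENNReal.rpow_pos (by norm_num) (by norm_num)).ne'
  have htwoPtop : twoP ≠ ∞ := ENNReal.rpow_ne_top_of_nonneg hp0.le (by norm_num)
  set L : ℝ≥0∞ := ∫⁻ ω, (‖∑ j, ξ j ω‖₊ : ℝ≥0∞) ^ p ∂P with hL
  have hkey : ∀ s : Finset (Fin k), L ≤ twoP * ∫⁻ ω, (‖Z s ω‖₊ : ℝ≥0∞) ^ p ∂P := by
    intro s
    have h := aux_signs hξm hξint hξmean s (hsplit s) hp
    rw [eLpNorm_eq_lintegral_rpow_enorm_toReal hq0 hq_top, eLpNorm_eq_lintegral_rpow_enorm_toReal hq0 hq_top,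
      ENNReal.toReal_ofReal hp0.le] at h
    have h2 := ENNReal.rpow_le_rpow h hp0.le
    rw [← ENNReal.rpow_mul, one_div_mul_cancel hp0.ne', ENNReal.rpow_one,
      ENNReal.mul_rpow_of_nonneg _ _ hp0.le, ← ENNReal.rpow_mul, one_div_mul_cancel hp0.ne',
      ENNReal.rpow_one] at h2
    exact h2
  have hinv : ∀ s : Finset (Fin k), twoP⁻¹ * L ≤ ∫⁻ ω, (‖Z s ω‖₊ : ℝ≥0∞) ^ p ∂P := by
    intro s
    calc twoP⁻¹ * L ≤ twoP⁻¹ * (twoP * ∫⁻ ω, (‖Z s ω‖₊ : ℝ≥0∞) ^ p ∂P) :=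
          mul_le_mul_right (hkey s) _
      _ = _ := by rw [← mul_assoc, ENNReal.inv_mul_cancel htwoP0 htwoPtop, one_mul]
  have hsum_P : (∑ s : Finset (Fin k), P (A s)) = 1 := by
    have h := measure_iUnion hA_disj hA_meas (μ := P)
    rw [hA_union, measure_univ, tsum_fintype] at h
    exact h.symm
  have hmain : L ≤ twoP * ∫⁻ ω, F ω ∂P := by
    rw [hdecomp]
    calc L = twoP * (twoP⁻¹ * L) := by
          rw [← mul_assoc, ENNReal.mul_inv_cancel htwoP0 htwoPtop, one_mul]
      _ = twoP * ((∑ s : Finset (Fin k), P (A s)) * (twoP⁻¹ * L)) := by rw [hsum_P, one_mul]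
      _ = twoP * (∑ s : Finset (Fin k), P (A s) * (twoP⁻¹ * L)) := by rw [Finset.sum_mul]
      _ ≤ twoP * (∑ s : Finset (Fin k), P (A s) * ∫⁻ ω, (‖Z s ω‖₊ : ℝ≥0∞) ^ p ∂P) :=
          mul_le_mul_right (Finset.sum_le_sum fun s _ => mul_le_mul_right (hinv s) _) _
  -- conclusion
  rw [eLpNorm_eq_lintegral_rpow_enorm_toReal hq0 hq_top, eLpNorm_eq_lintegral_rpow_enorm_toReal hq0 hq_top,
    ENNReal.toReal_ofReal hp0.le]
  calc (∫⁻ ω, (‖∑ j, ξ j ω‖₊ : ℝ≥0∞) ^ p ∂P) ^ (1/p)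
      ≤ (twoP * ∫⁻ ω, F ω ∂P) ^ (1/p) := ENNReal.rpow_le_rpow hmain (by positivity)
    _ = twoP ^ (1/p) * (∫⁻ ω, F ω ∂P) ^ (1/p) :=
        ENNReal.mul_rpow_of_nonneg _ _ (by positivity)
    _ = 2 * (∫⁻ ω, F ω ∂P) ^ (1/p) := by
        rw [htwoP, ← ENNReal.rpow_mul, mul_one_div_cancel hp0.ne', ENNReal.rpow_one]
end
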